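/- arXiv:1506.08306 — 2 statements merged into one kernel-verified Lean document; each statement's English description precedes it below -/
import Mathlib

section
/- There exist s₁₀' ≥ 1 and a constant C > 0 (depending only on p, μ, K and χ₀) such that for all s₀ ≥ s₁₀' the following holds for each of the two functions g(y) = χ(2y, s₀) and g(y) = y χ(2y, s₀): g_e ≡ 0 and ‖g_−(y)/(1+|y|³)‖_{L^∞(ℝ)} ≤ C/s₀^{2β}; moreover, if g(y) = χ(2y,s₀) then |g₀ − 1| ≤ C e^{−s₀^{2β}}, |g₁| ≤ C e^{−s₀^{2β}} and |g₂| ≤ C e^{−s₀^{2β}}, while if g(y) = y χ(2y,s₀) then |g₁ − 1| ≤ C e^{−s₀^{2β}}, |g₀| ≤ C e^{−s₀^{2β}} and |g₂| ≤ C e^{−s₀^{2β}}. -/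
noncomputable section
open MeasureTheory Real Set Filter Topology

namespace NLHeat

/-- Bundled parameters of the problem: `p > 3`, `μ > 0`, the cut-off function `χ₀`,
the constant `K ≥ 6` and the exponent `γ` with `3β < γ < min(5β-1, 2β+1)`. -/
structure Params where
  p : ℝ
  μ : ℝ
  K : ℝ
  χ₀ : ℝ → ℝ
  γ : ℝ
  hp : 3 < p
  hμ : 0 < μ
  hK : 6 ≤ K
  hχ_smooth : ContDiffOn ℝ (⊤ : ℕ∞) χ₀ (Ici 0)
  hχ_anti : AntitoneOn χ₀ (Ici 0)
  hχ_one : ∀ x ∈ Icc (0:ℝ) 1, χ₀ x = 1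
  hχ_supp : ∀ x : ℝ, 2 ≤ x → χ₀ x = 0
  hχ_range : ∀ x : ℝ, 0 ≤ x → χ₀ x ∈ Icc (0:ℝ) 1
  hγ_lo : 3 * ((p + 1) / (2 * (p - 1))) < γ
  hγ_hi : γ < min (5 * ((p + 1) / (2 * (p - 1))) - 1) (2 * ((p + 1) / (2 * (p - 1))) + 1)

/-- The Gaussian weight `ρ(y) = (4π)^{-1/2} e^{-y²/4}`. -/
def rho (y : ℝ) : ℝ := (4 * π) ^ (-(1:ℝ)/2) * Real.exp (-(y^2)/4)

/-- The Hermite polynomials `h₀ = 1`, `h₁ = y`, `h₂ = y² - 2`. -/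
def h : ℕ → ℝ → ℝ
  | 0, _ => 1
  | 1, y => y
  | _, y => y^2 - 2

/-- The normalized Hermite polynomials `k_m = h_m / ∫ h_m² ρ`. -/
def k (m : ℕ) (y : ℝ) : ℝ := h m y / ∫ x : ℝ, (h m x)^2 * rho x

/-- The linearized operator `L v = v'' - (y/2) v' + v`. -/
def Lop (v : ℝ → ℝ) (y : ℝ) : ℝ := deriv (deriv v) y - y / 2 * deriv v y + v y

namespace Params

/-- `q = 2p/(p+1)`. -/
def q (P : Params) : ℝ := 2 * P.p / (P.p + 1)

/-- `β = (p+1)/(2(p-1))`. -/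
def β (P : Params) : ℝ := (P.p + 1) / (2 * (P.p - 1))

/-- `κ = (p-1)^{-1/(p-1)}`. -/
def κ (P : Params) : ℝ := (P.p - 1) ^ (-(1:ℝ) / (P.p - 1))

/-- The constant `b`. -/
def b (P : Params) : ℝ :=
  (1/2) * (P.p - 1) ^ ((P.p - 2) / (P.p - 1)) *
    (((4 * π) ^ ((1:ℝ)/2) * (P.p + 1)^2) /
      (P.p * ∫ y : ℝ, |y| ^ P.q * Real.exp (-(y^2)/4))) ^ ((P.p + 1)/(P.p - 1)) *
    P.μ ^ (-((P.p + 1)/(P.p - 1)))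

/-- The constant `a = 2bκ/(p-1)²`. -/
def a (P : Params) : ℝ := 2 * P.b * P.κ / (P.p - 1)^2

/-- The blow-up profile `φ(y,s) = (p-1 + b y²/s^{2β})^{-1/(p-1)} + a/s^{2β}`. -/
def φ (P : Params) (y s : ℝ) : ℝ :=
  (P.p - 1 + P.b * y^2 / s ^ (2 * P.β)) ^ (-(1:ℝ)/(P.p - 1)) + P.a / s ^ (2 * P.β)

/-- The cut-off `χ(y,s) = χ₀(|y|/(K s^β))`. -/
def chi (P : Params) (y s : ℝ) : ℝ := P.χ₀ (|y| / (P.K * s ^ P.β))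

/-- Projection of (the truncation of) `r` on `h_m`: `r_m = ∫ r χ k_m ρ`. -/
def proj (P : Params) (r : ℝ → ℝ) (s : ℝ) (m : ℕ) : ℝ :=
  ∫ y : ℝ, r y * P.chi y s * k m y * rho y

/-- The negative part `r₋ = r_b - r₀h₀ - r₁h₁ - r₂h₂` where `r_b = rχ`. -/
def rminus (P : Params) (r : ℝ → ℝ) (s y : ℝ) : ℝ :=
  r y * P.chi y s -
    (P.proj r s 0 * h 0 y + P.proj r s 1 * h 1 y + P.proj r s 2 * h 2 y)

/-- The outer part `r_e = r(1-χ)`. -/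
def re (P : Params) (r : ℝ → ℝ) (s y : ℝ) : ℝ := r y * (1 - P.chi y s)

/-- The shrinking set `ϑ_A(s)`. -/
def memTheta (P : Params) (A s : ℝ) (r : ℝ → ℝ) : Prop :=
  (∀ y : ℝ, |P.re r s y| ≤ A^2 / s ^ (P.γ - 3 * P.β)) ∧
  (∀ y : ℝ, |P.rminus r s y| ≤ A / s ^ P.γ * (1 + |y|^3)) ∧
  |P.proj r s 0| ≤ A / s ^ (2 * P.β + 1) ∧
  |P.proj r s 1| ≤ A / s ^ (2 * P.β + 1) ∧
  |P.proj r s 2| ≤ Real.sqrt A / s ^ (4 * P.β - 1)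

/-- The potential `V(y,s) = p φ^{p-1} - p/(p-1)`. -/
def Vpot (P : Params) (y s : ℝ) : ℝ := P.p * (P.φ y s) ^ (P.p - 1) - P.p / (P.p - 1)

/-- The quadratic term `B(v)`. -/
def Bterm (P : Params) (v : ℝ → ℝ) (y s : ℝ) : ℝ :=
  |P.φ y s + v y| ^ (P.p - 1) * (P.φ y s + v y) - (P.φ y s) ^ P.p -
    P.p * (P.φ y s) ^ (P.p - 1) * v y

/-- The gradient term `G(v) = μ|∂_yφ + ∂_yv|^q - μ|∂_yφ|^q`. -/
def Gterm (P : Params) (v : ℝ → ℝ) (y s : ℝ) : ℝ :=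
  P.μ * |deriv (fun z => P.φ z s) y + deriv v y| ^ P.q -
    P.μ * |deriv (fun z => P.φ z s) y| ^ P.q

/-- The rest term `R(y,s)`. -/
def Rterm (P : Params) (y s : ℝ) : ℝ :=
  deriv (deriv (fun z => P.φ z s)) y - y / 2 * deriv (fun z => P.φ z s) y -
    P.φ y s / (P.p - 1) + (P.φ y s) ^ P.p - deriv (fun σ => P.φ y σ) s +
    P.μ * |deriv (fun z => P.φ z s) y| ^ P.q

/-- `v` solves equation (E): `∂_s v = (L+V)v + B(v) + G(v) + R` on `ℝ × [s₀,s₁]`. -/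
def SolvesE (P : Params) (v : ℝ → ℝ → ℝ) (s₀ s₁ : ℝ) : Prop :=
  ∀ s ∈ Icc s₀ s₁, ∀ y : ℝ,
    HasDerivAt (fun σ => v σ y)
      (Lop (v s) y + P.Vpot y s * v s y + P.Bterm (v s) y s + P.Gterm (v s) y s +
        P.Rterm y s) s

/-- The initial data `ψ_{s₀,d₀,d₁}`. -/
def ψinit (P : Params) (A s₀ d₀ d₁ : ℝ) (y : ℝ) : ℝ :=
  A / s₀ ^ (2 * P.β + 1) * (d₀ * h 0 y + d₁ * h 1 y) * P.chi (2 * y) s₀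

end Params

lemma cst_pos : 0 < (4 * π) ^ (-(1:ℝ)/2) :=
  Real.rpow_pos_of_pos (by positivity) _

lemma rho_pos (y : ℝ) : 0 < rho y := by
  unfold rho; positivity

lemma rho_neg (y : ℝ) : rho (-y) = rho y := by simp [rho]

lemma continuous_rho : Continuous rho := by
  unfold rho; continuity

lemma rho_eq (y : ℝ) : rho y = (4 * π) ^ (-(1:ℝ)/2) * Real.exp (-(1/4) * y^2) := by
  unfold rho; congr 1; ring_nf

lemma integrable_rho : Integrable rho := by
  have := (integrable_exp_neg_mul_sq (show (0:ℝ) < 1/4 by norm_num)).const_mul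
    ((4 * π) ^ (-(1:ℝ)/2))
  exact this.congr (ae_of_all _ fun y => (rho_eq y).symm)

/-- growth bound -/
lemma growth_bound (y : ℝ) :
    1 + y^2 + |y|^3 + y^4 ≤ 4000 * Real.exp ((1/16) * y^2) := by
  set a := |y| with ha
  have ha0 : 0 ≤ a := abs_nonneg y
  have hy2 : y^2 = a^2 := (sq_abs y).symm
  have hy4 : y^4 = a^4 := by rw [show (4:ℕ) = 2*2 from rfl, pow_mul, pow_mul, hy2]
  have hE1 : 1 ≤ Real.exp ((1/16) * y^2) := by
    apply Real.one_le_exp; positivity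
  have hhalf : a^2/32 ≤ Real.exp (a^2/32) := by
    have := Real.add_one_le_exp (a^2/32); linarith
  have hmul : Real.exp (a^2/32) * Real.exp (a^2/32) = Real.exp ((1/16) * y^2) := by
    rw [← Real.exp_add]; congr 1; rw [hy2]; ring
  have hE4 : a^4 ≤ 1024 * Real.exp ((1/16) * y^2) := by
    have h1 : a^2/32 * (a^2/32) ≤ Real.exp (a^2/32) * Real.exp (a^2/32) := by
      apply mul_le_mul hhalf hhalf (by positivity) (Real.exp_pos _).le
    rw [hmul] at h1; nlinarith
  nlinarith [sq_nonneg (a^2 - 1), sq_nonneg (a^2 - a), hE1, hE4, ha0, hy2, hy4]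

lemma integrable_gauss16 : Integrable (fun y : ℝ => Real.exp (-(1/16) * y^2)) :=
  integrable_exp_neg_mul_sq (by norm_num)

lemma integrable_of_gauss_bound {f : ℝ → ℝ} (hf : Continuous f) {c : ℝ}
    (hb : ∀ y, |f y| ≤ c * Real.exp (-(1/16) * y^2)) : Integrable f :=
  (integrable_gauss16.const_mul c).mono' hf.aestronglyMeasurable
    (ae_of_all _ fun y => by rw [Real.norm_eq_abs]; exact hb y)

/-- master pointwise domination -/
lemma dom_bound {w : ℝ → ℝ} (hw : ∀ y, |w y| ≤ 4 * (1 + y^2 + |y|^3 + y^4)) (y : ℝ) :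
    |w y * rho y| ≤ (16000 * (4 * π) ^ (-(1:ℝ)/2)) * Real.exp (-(3/16) * y^2) := by
  have h1 : |w y * rho y| = |w y| * rho y := by
    rw [abs_mul, abs_of_pos (rho_pos y)]
  rw [h1, rho_eq]
  have h2 : |w y| ≤ 4000 * 4 * Real.exp ((1/16) * y^2) := by
    have := growth_bound y
    have := hw y
    nlinarith [Real.exp_pos ((1/16) * y^2)]
  have hρ : (0:ℝ) < (4 * π) ^ (-(1:ℝ)/2) := cst_pos
  calc |w y| * ((4 * π) ^ (-(1:ℝ)/2) * Real.exp (-(1/4) * y^2))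
      ≤ (4000 * 4 * Real.exp ((1/16) * y^2)) * ((4 * π) ^ (-(1:ℝ)/2) * Real.exp (-(1/4) * y^2)) := by
        apply mul_le_mul_of_nonneg_right h2; positivity
    _ = (16000 * (4 * π) ^ (-(1:ℝ)/2)) * (Real.exp ((1/16) * y^2) * Real.exp (-(1/4) * y^2)) := by
        ring
    _ = (16000 * (4 * π) ^ (-(1:ℝ)/2)) * Real.exp (-(3/16) * y^2) := by
        rw [← Real.exp_add]; congr 1; ring

lemma exp316_le (y : ℝ) : Real.exp (-(3/16) * y^2) ≤ Real.exp (-(1/16) * y^2) := by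
  apply Real.exp_le_exp.mpr; nlinarith [sq_nonneg y]

-- h and k simp lemmas
lemma h0 (y : ℝ) : h 0 y = 1 := rfl
lemma h1 (y : ℝ) : h 1 y = y := rfl
lemma h2 (y : ℝ) : h 2 y = y^2 - 2 := rfl

-- the constants c_m
lemma k_eq (m : ℕ) (y : ℝ) : k m y = h m y / ∫ x : ℝ, (h m x)^2 * rho x := rfl

section ChiLemmas

variable (P : Params) {s₀ : ℝ} (hs : 1 ≤ s₀)

lemma beta_pos : 0 < P.β := by
  have hp := P.hp; exact div_pos (by linarith) (by linarith)

lemma D_pos (hs : 1 ≤ s₀) : 0 < P.K * s₀ ^ P.β := by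
  have h1 : (0:ℝ) < s₀ ^ P.β := Real.rpow_pos_of_pos (by linarith) _
  have := P.hK; nlinarith

lemma sb_one (hs : 1 ≤ s₀) : 1 ≤ s₀ ^ P.β := by
  have := Real.rpow_le_rpow_of_exponent_le hs (le_of_lt (beta_pos P)) (y := 0)
  simpa [Real.rpow_zero] using this

lemma sb_sq (hs : 1 ≤ s₀) : (s₀ ^ P.β)^2 = s₀ ^ (2 * P.β) := by
  rw [← Real.rpow_natCast (s₀ ^ P.β) 2, ← Real.rpow_mul (by linarith : (0:ℝ) ≤ s₀)]
  norm_num [mul_comm]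

lemma chi_mem (hs : 1 ≤ s₀) (y : ℝ) : P.chi y s₀ ∈ Icc (0:ℝ) 1 :=
  P.hχ_range _ (div_nonneg (abs_nonneg _) (D_pos P hs).le)

lemma chi_eq_one (hs : 1 ≤ s₀) {y : ℝ} (hy : |y| ≤ P.K * s₀ ^ P.β) : P.chi y s₀ = 1 :=
  P.hχ_one _ ⟨div_nonneg (abs_nonneg _) (D_pos P hs).le, (div_le_one (D_pos P hs)).mpr hy⟩

lemma chi2_eq_zero (hs : 1 ≤ s₀) {y : ℝ} (hy : P.K * s₀ ^ P.β < |y|) :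
    P.chi (2 * y) s₀ = 0 := by
  apply P.hχ_supp
  rw [abs_mul, abs_two, le_div_iff₀ (D_pos P hs)]
  linarith

lemma chi2_eq_one (hs : 1 ≤ s₀) {y : ℝ} (hy : 2 * |y| ≤ P.K * s₀ ^ P.β) :
    P.chi (2 * y) s₀ = 1 := by
  apply chi_eq_one P hs
  rw [abs_mul, abs_two]; linarith

lemma chi_mul (hs : 1 ≤ s₀) (y : ℝ) :
    P.chi (2 * y) s₀ * P.chi y s₀ = P.chi (2 * y) s₀ := by
  rcases le_or_gt |y| (P.K * s₀ ^ P.β) with hy | hy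
  · rw [chi_eq_one P hs hy, mul_one]
  · rw [chi2_eq_zero P hs hy, zero_mul]

lemma chi_neg (y s : ℝ) : P.chi (-y) s = P.chi y s := by
  unfold Params.chi; rw [abs_neg]

lemma continuous_chi2 (hs : 1 ≤ s₀) : Continuous (fun y : ℝ => P.chi (2 * y) s₀) := by
  have hc : ContinuousOn P.χ₀ (Ici 0) := P.hχ_smooth.continuousOn
  have : (fun y : ℝ => P.chi (2 * y) s₀) =
      P.χ₀ ∘ (fun y : ℝ => |2 * y| / (P.K * s₀ ^ P.β)) := rfl
  rw [this]
  apply hc.comp_continuous (by continuity)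
  intro y
  exact div_nonneg (abs_nonneg _) (D_pos P hs).le

lemma abs_chi2_sub_one (hs : 1 ≤ s₀) (y : ℝ) : |P.chi (2 * y) s₀ - 1| ≤ 1 := by
  obtain ⟨hl, hr⟩ := chi_mem P hs (y := 2 * y)
  rw [abs_le]; constructor <;> linarith

end ChiLemmas

-- odd integral
lemma odd_integral {F : ℝ → ℝ} (hF : ∀ y, F (-y) = - F y) : ∫ y : ℝ, F y = 0 := by
  have h1 := integral_neg_eq_self F (volume : Measure ℝ)
  have h2 : ∫ y : ℝ, F (-y) = ∫ y : ℝ, - F y := by simp only [hF]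
  rw [h2, integral_neg] at h1
  linarith

-- bound with plain exponential (no rho prefactor)
lemma poly_gauss_bound {w : ℝ → ℝ} (hw : ∀ y, |w y| ≤ 4 * (1 + y^2 + |y|^3 + y^4)) (y : ℝ) :
    |w y * Real.exp (-(y^2)/4)| ≤ 16000 * Real.exp (-(1/16) * y^2) := by
  have h2 : |w y| ≤ 16000 * Real.exp ((1/16) * y^2) := by
    have := growth_bound y
    have := hw y
    nlinarith [Real.exp_pos ((1/16) * y^2)]
  calc |w y * Real.exp (-(y^2)/4)| = |w y| * Real.exp (-(y^2)/4) := by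
        rw [abs_mul, abs_of_pos (Real.exp_pos _)]
    _ ≤ (16000 * Real.exp ((1/16) * y^2)) * Real.exp (-(y^2)/4) := by
        apply mul_le_mul_of_nonneg_right h2 (Real.exp_pos _).le
    _ = 16000 * Real.exp ((1/16) * y^2 + -(y^2)/4) := by rw [Real.exp_add]; ring
    _ ≤ 16000 * Real.exp (-(1/16) * y^2) := by
        have : (1/16) * y^2 + -(y^2)/4 ≤ -(1/16) * y^2 := by nlinarith [sq_nonneg y]
        have := Real.exp_le_exp.mpr this
        linarith

-- derivative for the moment computation
lemma moment_hasDeriv (x : ℝ) :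
    HasDerivAt (fun t : ℝ => t * Real.exp (-(t^2)/4))
      ((1 - x^2/2) * Real.exp (-(x^2)/4)) x := by
  have h1 : HasDerivAt (fun t : ℝ => -(t^2)/4) (-(2*x)/4) x := by
    have := (hasDerivAt_pow 2 x).neg.div_const 4
    simpa using this
  have h2 := (h1.exp).const_mul (1:ℝ)
  have h3 : HasDerivAt (fun t : ℝ => t * Real.exp (-(t^2)/4))
      (1 * Real.exp (-(x^2)/4) + x * (Real.exp (-(x^2)/4) * (-(2*x)/4))) x :=
    (hasDerivAt_id' x).mul h1.exp
  convert h3 using 1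
  ring

lemma moment_tendsto :
    Filter.Tendsto (fun t : ℝ => t * Real.exp (-(t^2)/4)) Filter.atTop (𝓝 0) := by
  have ho := rpow_mul_exp_neg_mul_sq_isLittleO_exp_neg (show (0:ℝ) < 1/4 by norm_num) 1
  have heq : (fun x : ℝ => x ^ (1:ℝ) * Real.exp (-(1/4) * x ^ 2)) =
      (fun t : ℝ => t * Real.exp (-(t^2)/4)) := by
    funext x; rw [Real.rpow_one]; congr 1; congr 1; ring
  rw [heq] at ho
  have hexp : Filter.Tendsto (fun x : ℝ => Real.exp (-(1/2) * x)) Filter.atTop (𝓝 0) := by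
    have hcomp : Filter.Tendsto (fun x : ℝ => -((1/2) * x)) Filter.atTop Filter.atBot := by
      apply Filter.tendsto_neg_atBot_iff.mpr
      exact (Filter.tendsto_id.const_mul_atTop (by norm_num))
    have := Real.tendsto_exp_atBot.comp hcomp
    refine this.congr fun x => by simp [Function.comp]
  exact ho.isBigO.trans_tendsto hexp

lemma integrable_moment :
    Integrable (fun x : ℝ => (1 - x^2/2) * Real.exp (-(x^2)/4)) := by
  apply integrable_of_gauss_bound
  · continuity
  · intro y
    apply le_trans (poly_gauss_bound (w := fun x => 1 - x^2/2) ?_ y) le_rfl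
    intro x
    have h1 : |1 - x^2/2| ≤ 1 + x^2/2 := by
      rw [abs_le]; constructor <;> nlinarith [sq_nonneg x]
    have := abs_nonneg x
    nlinarith [pow_abs x 3, abs_nonneg (x^3), sq_nonneg x, sq_nonneg (x^2)]

lemma moment_Ioi : ∫ x in Ioi (0:ℝ), (1 - x^2/2) * Real.exp (-(x^2)/4) = 0 := by
  have := integral_Ioi_of_hasDerivAt_of_tendsto'
    (f := fun t : ℝ => t * Real.exp (-(t^2)/4))
    (f' := fun x : ℝ => (1 - x^2/2) * Real.exp (-(x^2)/4))
    (a := 0) (m := 0)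
    (fun x _ => moment_hasDeriv x) integrable_moment.integrableOn moment_tendsto
  simpa using this

lemma moment_zero : ∫ x : ℝ, (x^2 - 2) * rho x = 0 := by
  have e1 : (fun x : ℝ => (x^2 - 2) * rho x) =
      (fun x : ℝ => (4 * π) ^ (-(1:ℝ)/2) * ((x^2 - 2) * Real.exp (-(x^2)/4))) := by
    funext x; unfold rho; ring
  rw [e1, integral_const_mul]
  have e2 : (fun x : ℝ => (x^2 - 2) * Real.exp (-(x^2)/4)) =
      (fun x : ℝ => (|x|^2 - 2) * Real.exp (-(|x|^2)/4)) := by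
    funext x; rw [sq_abs]
  have e3 : ∫ x : ℝ, (x^2 - 2) * Real.exp (-(x^2)/4) =
      2 * ∫ x in Ioi (0:ℝ), (x^2 - 2) * Real.exp (-(x^2)/4) := by
    conv_lhs => rw [e2]
    exact integral_comp_abs (f := fun t : ℝ => (t^2 - 2) * Real.exp (-(t^2)/4))
  have e4 : ∫ x in Ioi (0:ℝ), (x^2 - 2) * Real.exp (-(x^2)/4) = 0 := by
    have e5 : (fun x : ℝ => (x^2 - 2) * Real.exp (-(x^2)/4)) =
        (fun x : ℝ => (-2) * ((1 - x^2/2) * Real.exp (-(x^2)/4))) := by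
      funext x; ring
    rw [e5, integral_const_mul, moment_Ioi, mul_zero]
  rw [e3, e4]; ring

lemma h_succ_succ (n : ℕ) (y : ℝ) : h (n+2) y = y^2 - 2 := rfl

lemma continuous_h (m : ℕ) : Continuous (h m) := by
  match m with
  | 0 => exact continuous_const
  | 1 => exact continuous_id
  | (n+2) => exact (show Continuous fun y : ℝ => y^2 - 2 by continuity)

lemma hm_bound (m : ℕ) (y : ℝ) : |h m y| ≤ 2 + y^2 := by
  match m with
  | 0 => simp [h0]; nlinarith [sq_nonneg y]
  | 1 => simp only [h1]
         rcases le_or_gt |y| 1 with hy | hy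
         · nlinarith [sq_nonneg y]
         · nlinarith [sq_abs y, abs_nonneg y]
  | (n+2) => rw [h_succ_succ]
             rw [abs_le]; constructor <;> nlinarith [sq_nonneg y]

lemma hm_sq_bound (m : ℕ) (y : ℝ) : |(h m y)^2| ≤ 4 * (1 + y^2 + |y|^3 + y^4) := by
  have h1 := hm_bound m y
  have h2 : |(h m y)^2| = |h m y| * |h m y| := by rw [sq, abs_mul]
  have h3 : |h m y| * |h m y| ≤ (2 + y^2) * (2 + y^2) :=
    mul_le_mul h1 h1 (abs_nonneg _) (by nlinarith [sq_nonneg y])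
  have h4 : (0:ℝ) ≤ |y|^3 := by positivity
  have h5 : y^4 = (y^2)^2 := by ring
  rw [h2]; nlinarith [sq_nonneg y, sq_nonneg (y^2 - 1)]

lemma integrable_hm_sq_rho (m : ℕ) : Integrable (fun x : ℝ => (h m x)^2 * rho x) := by
  apply integrable_of_gauss_bound (c := 16000 * (4 * π) ^ (-(1:ℝ)/2))
  · exact ((continuous_h m).pow 2).mul continuous_rho
  · intro y
    calc |(h m y)^2 * rho y| ≤ (16000 * (4 * π) ^ (-(1:ℝ)/2)) * Real.exp (-(3/16) * y^2) :=
          dom_bound (fun z => hm_sq_bound m z) y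
      _ ≤ (16000 * (4 * π) ^ (-(1:ℝ)/2)) * Real.exp (-(1/16) * y^2) := by
          have := exp316_le y
          have : (0:ℝ) < 16000 * (4 * π) ^ (-(1:ℝ)/2) := by
            have := cst_pos; positivity
          nlinarith [exp316_le y]

lemma hm_ne_zero (m : ℕ) {x : ℝ} (hx : 2 < x) : h m x ≠ 0 := by
  match m with
  | 0 => simp [h0]
  | 1 => simp only [h1]; linarith
  | (n+2) => rw [h_succ_succ]; nlinarith

lemma cm_pos (m : ℕ) : 0 < ∫ x : ℝ, (h m x)^2 * rho x := by
  rw [integral_pos_iff_support_of_nonneg]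
  · have hsub : Ioi (2:ℝ) ⊆ Function.support (fun x : ℝ => (h m x)^2 * rho x) := by
      intro x hx
      have h1 : h m x ≠ 0 := hm_ne_zero m hx
      have h2 : (0:ℝ) < rho x := rho_pos x
      simp only [Function.mem_support]
      positivity
    calc (0:ENNReal) < volume (Ioi (2:ℝ)) := by rw [Real.volume_Ioi]; exact ENNReal.zero_lt_top
      _ ≤ _ := measure_mono hsub
  · intro x
    have := rho_pos x
    positivity
  · exact integrable_hm_sq_rho m

/-- The tail estimate. -/
lemma tail_bound (P : Params) {s₀ : ℝ} (hs : 1 ≤ s₀) {w : ℝ → ℝ}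
    (hwc : Continuous w) (hw : ∀ y, |w y| ≤ 4 * (1 + y^2 + |y|^3 + y^4)) :
    |∫ y : ℝ, (P.chi (2 * y) s₀ - 1) * (w y * rho y)| ≤
      (16000 * (4 * π) ^ (-(1:ℝ)/2) * ∫ y : ℝ, Real.exp (-(1/16) * y^2)) *
        Real.exp (-(s₀ ^ (2 * P.β))) := by
  set c5 : ℝ := 16000 * (4 * π) ^ (-(1:ℝ)/2) with hc5
  have hc5pos : 0 < c5 := by rw [hc5]; have := cst_pos; positivity
  have hexs : (0:ℝ) < Real.exp (-(s₀ ^ (2 * P.β))) := Real.exp_pos _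
  have hpt : ∀ y : ℝ, |(P.chi (2 * y) s₀ - 1) * (w y * rho y)| ≤
      (c5 * Real.exp (-(s₀ ^ (2 * P.β)))) * Real.exp (-(1/16) * y^2) := by
    intro y
    rcases le_or_gt (2 * |y|) (P.K * s₀ ^ P.β) with hy | hy
    · rw [chi2_eq_one P hs hy]
      simp only [sub_self, zero_mul, abs_zero]
      positivity
    · have hb1 : |P.chi (2 * y) s₀ - 1| ≤ 1 := abs_chi2_sub_one P hs y
      have hb2 : |w y * rho y| ≤ c5 * Real.exp (-(3/16) * y^2) := dom_bound hw y
      have hy3 : 3 * (s₀ ^ P.β) ≤ |y| := by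
        have hK := P.hK
        have ht1 : (1:ℝ) ≤ s₀ ^ P.β := sb_one P hs
        nlinarith
      have hysq : 9 * s₀ ^ (2 * P.β) ≤ y^2 := by
        have h9 : (3 * (s₀ ^ P.β))^2 ≤ |y|^2 := by
          apply pow_le_pow_left₀ (by positivity) hy3
        rw [sq_abs] at h9
        rw [← sb_sq P hs]
        nlinarith
      have hsplit : Real.exp (-(3/16) * y^2) ≤
          Real.exp (-(s₀ ^ (2 * P.β))) * Real.exp (-(1/16) * y^2) := by
        rw [← Real.exp_add]
        apply Real.exp_le_exp.mpr
        nlinarith [sq_nonneg y]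
      calc |(P.chi (2 * y) s₀ - 1) * (w y * rho y)|
          = |P.chi (2 * y) s₀ - 1| * |w y * rho y| := abs_mul _ _
        _ ≤ 1 * (c5 * Real.exp (-(3/16) * y^2)) :=
            mul_le_mul hb1 hb2 (abs_nonneg _) zero_le_one
        _ = c5 * Real.exp (-(3/16) * y^2) := one_mul _
        _ ≤ c5 * (Real.exp (-(s₀ ^ (2 * P.β))) * Real.exp (-(1/16) * y^2)) := by
            apply mul_le_mul_of_nonneg_left hsplit hc5pos.le
        _ = (c5 * Real.exp (-(s₀ ^ (2 * P.β)))) * Real.exp (-(1/16) * y^2) := by ring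
  have hint : Integrable (fun y : ℝ =>
      (c5 * Real.exp (-(s₀ ^ (2 * P.β)))) * Real.exp (-(1/16) * y^2)) :=
    integrable_gauss16.const_mul _
  have hmain := norm_integral_le_of_norm_le hint
    (ae_of_all _ fun y => by rw [Real.norm_eq_abs]; exact hpt y)
  rw [integral_const_mul] at hmain
  rw [Real.norm_eq_abs] at hmain
  calc |∫ y : ℝ, (P.chi (2 * y) s₀ - 1) * (w y * rho y)|
      ≤ c5 * Real.exp (-(s₀ ^ (2 * P.β))) * ∫ y : ℝ, Real.exp (-(1/16) * y^2) := hmain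
    _ = (c5 * ∫ y : ℝ, Real.exp (-(1/16) * y^2)) * Real.exp (-(s₀ ^ (2 * P.β))) := by ring

section Proj

variable (P : Params) {s₀ : ℝ}

lemma hm_bound4 (m : ℕ) (y : ℝ) : |h m y| ≤ 4 * (1 + y^2 + |y|^3 + y^4) := by
  have := hm_bound m y
  have h4 : (0:ℝ) ≤ |y|^3 := by positivity
  nlinarith [sq_nonneg y, sq_nonneg (y^2)]

lemma y_hm_bound (m : ℕ) (y : ℝ) : |y * h m y| ≤ 4 * (1 + y^2 + |y|^3 + y^4) := by
  have h1 := hm_bound m y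
  have h2 : |y * h m y| = |y| * |h m y| := abs_mul _ _
  have h3 : |y| * |h m y| ≤ |y| * (2 + y^2) :=
    mul_le_mul_of_nonneg_left h1 (abs_nonneg y)
  have h5 : |y| * y^2 = |y|^3 := by
    rw [← sq_abs y]; ring
  have h6 : 2 * |y| ≤ 1 + y^2 := by nlinarith [sq_nonneg (|y| - 1), sq_abs y]
  have h7 : (0:ℝ) ≤ y^4 := by positivity
  have h8 : |y| * (2 + y^2) = 2 * |y| + |y|^3 := by rw [← h5]; ring
  have h9 : (0:ℝ) ≤ |y|^3 := by positivity
  linarith [sq_nonneg y]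

lemma integrable_u_rho {u : ℝ → ℝ} (hc : Continuous u)
    (hg : ∀ y, |u y| ≤ 4 * (1 + y^2 + |y|^3 + y^4)) :
    Integrable (fun y : ℝ => u y * rho y) := by
  apply integrable_of_gauss_bound (c := 16000 * (4 * π) ^ (-(1:ℝ)/2))
  · exact hc.mul continuous_rho
  · intro y
    have h1 := dom_bound hg y
    have h2 := exp316_le y
    have h3 : (0:ℝ) < 16000 * (4 * π) ^ (-(1:ℝ)/2) := by
      have := cst_pos; positivity
    nlinarith

lemma integrable_chim1_u_rho (hs : 1 ≤ s₀) {u : ℝ → ℝ} (hc : Continuous u)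
    (hg : ∀ y, |u y| ≤ 4 * (1 + y^2 + |y|^3 + y^4)) :
    Integrable (fun y : ℝ => (P.chi (2 * y) s₀ - 1) * (u y * rho y)) := by
  apply integrable_of_gauss_bound (c := 16000 * (4 * π) ^ (-(1:ℝ)/2))
  · exact ((continuous_chi2 P hs).sub continuous_const).mul (hc.mul continuous_rho)
  · intro y
    have h1 := dom_bound hg y
    have h2 := exp316_le y
    have h3 : (0:ℝ) < 16000 * (4 * π) ^ (-(1:ℝ)/2) := by
      have := cst_pos; positivity
    have h4 := abs_chi2_sub_one P hs y
    calc |(P.chi (2 * y) s₀ - 1) * (u y * rho y)|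
        = |P.chi (2 * y) s₀ - 1| * |u y * rho y| := abs_mul _ _
      _ ≤ 1 * (16000 * (4 * π) ^ (-(1:ℝ)/2) * Real.exp (-(3/16) * y^2)) :=
          mul_le_mul h4 h1 (abs_nonneg _) zero_le_one
      _ ≤ 16000 * (4 * π) ^ (-(1:ℝ)/2) * Real.exp (-(1/16) * y^2) := by
          rw [one_mul]; nlinarith

lemma proj_g1 (hs : 1 ≤ s₀) (m : ℕ) :
    P.proj (fun z => P.chi (2 * z) s₀) s₀ m =
      (∫ y : ℝ, P.chi (2 * y) s₀ * (h m y * rho y)) / (∫ x : ℝ, (h m x)^2 * rho x) := by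
  unfold Params.proj
  rw [← integral_div]
  congr 1; funext y
  simp only [k_eq]
  linear_combination ((h m y * rho y) / (∫ x : ℝ, (h m x)^2 * rho x)) * (chi_mul P hs y)

lemma proj_g2 (hs : 1 ≤ s₀) (m : ℕ) :
    P.proj (fun z => z * P.chi (2 * z) s₀) s₀ m =
      (∫ y : ℝ, P.chi (2 * y) s₀ * ((y * h m y) * rho y)) / (∫ x : ℝ, (h m x)^2 * rho x) := by
  unfold Params.proj
  rw [← integral_div]
  congr 1; funext y
  simp only [k_eq]
  linear_combination ((y * h m y * rho y) / (∫ x : ℝ, (h m x)^2 * rho x)) * (chi_mul P hs y)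

lemma split_integral (hs : 1 ≤ s₀) {u : ℝ → ℝ} (hc : Continuous u)
    (hg : ∀ y, |u y| ≤ 4 * (1 + y^2 + |y|^3 + y^4)) :
    ∫ y : ℝ, P.chi (2 * y) s₀ * (u y * rho y) =
      (∫ y : ℝ, (P.chi (2 * y) s₀ - 1) * (u y * rho y)) + ∫ y : ℝ, u y * rho y := by
  rw [← integral_add (integrable_chim1_u_rho P hs hc hg) (integrable_u_rho hc hg)]
  congr 1; funext y; ring

end Proj

/-- The master constant. -/
def Mconst : ℝ := 16000 * (4 * π) ^ (-(1:ℝ)/2) * ∫ y : ℝ, Real.exp (-(1/16) * y^2)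

lemma Mconst_nonneg : 0 ≤ Mconst := by
  unfold Mconst
  apply mul_nonneg
  · have := cst_pos; positivity
  · exact integral_nonneg fun y => (Real.exp_pos _).le

section Estimates

variable (P : Params) {s₀ : ℝ}

lemma tail_bound' (hs : 1 ≤ s₀) {w : ℝ → ℝ}
    (hwc : Continuous w) (hw : ∀ y, |w y| ≤ 4 * (1 + y^2 + |y|^3 + y^4)) :
    |∫ y : ℝ, (P.chi (2 * y) s₀ - 1) * (w y * rho y)| ≤
      Mconst * Real.exp (-(s₀ ^ (2 * P.β))) :=
  tail_bound P hs hwc hw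

lemma proj_g1_one (hs : 1 ≤ s₀) : P.proj (fun z => P.chi (2 * z) s₀) s₀ 1 = 0 := by
  unfold Params.proj
  apply odd_integral
  intro y
  simp only
  rw [show 2 * -y = -(2 * y) by ring, chi_neg, chi_neg, rho_neg]
  simp only [k_eq, h1]
  ring

lemma proj_g2_zero (hs : 1 ≤ s₀) : P.proj (fun z => z * P.chi (2 * z) s₀) s₀ 0 = 0 := by
  unfold Params.proj
  apply odd_integral
  intro y
  simp only
  rw [show 2 * -y = -(2 * y) by ring, chi_neg, chi_neg, rho_neg]
  simp only [k_eq, h0]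
  ring

lemma proj_g2_two (hs : 1 ≤ s₀) : P.proj (fun z => z * P.chi (2 * z) s₀) s₀ 2 = 0 := by
  unfold Params.proj
  apply odd_integral
  intro y
  simp only
  rw [show 2 * -y = -(2 * y) by ring, chi_neg, chi_neg, rho_neg]
  simp only [k_eq, h2]
  ring

lemma proj_g1_zero (hs : 1 ≤ s₀) :
    |P.proj (fun z => P.chi (2 * z) s₀) s₀ 0 - 1| ≤
      (Mconst / (∫ x : ℝ, (h 0 x)^2 * rho x)) * Real.exp (-(s₀ ^ (2 * P.β))) := by
  set c0 : ℝ := ∫ x : ℝ, (h 0 x)^2 * rho x with hc0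
  have hc0pos : 0 < c0 := cm_pos 0
  have h1' : ∫ y : ℝ, h 0 y * rho y = c0 := by
    rw [hc0]; congr 1; funext x; rw [h0]; ring
  have heq := proj_g1 P hs 0
  rw [split_integral P hs (continuous_h 0) (hm_bound4 0), h1'] at heq
  have hT := tail_bound' P hs (continuous_h 0) (hm_bound4 0)
  set T : ℝ := ∫ y : ℝ, (P.chi (2 * y) s₀ - 1) * (h 0 y * rho y) with hTdef
  rw [heq, show (T + c0) / c0 - 1 = T / c0 by field_simp; ring, abs_div, abs_of_pos hc0pos,
    div_mul_eq_mul_div]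
  exact div_le_div_of_nonneg_right hT hc0pos.le |>.trans_eq rfl

lemma proj_g1_two (hs : 1 ≤ s₀) :
    |P.proj (fun z => P.chi (2 * z) s₀) s₀ 2| ≤
      (Mconst / (∫ x : ℝ, (h 2 x)^2 * rho x)) * Real.exp (-(s₀ ^ (2 * P.β))) := by
  set c2 : ℝ := ∫ x : ℝ, (h 2 x)^2 * rho x with hc2
  have hc2pos : 0 < c2 := cm_pos 2
  have h1' : ∫ y : ℝ, h 2 y * rho y = 0 := by
    simp only [h2]; exact moment_zero
  have heq := proj_g1 P hs 2
  rw [split_integral P hs (continuous_h 2) (hm_bound4 2), h1', add_zero] at heq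
  have hT := tail_bound' P hs (continuous_h 2) (hm_bound4 2)
  rw [heq, abs_div, abs_of_pos hc2pos, div_mul_eq_mul_div]
  exact div_le_div_of_nonneg_right hT hc2pos.le

lemma proj_g2_one (hs : 1 ≤ s₀) :
    |P.proj (fun z => z * P.chi (2 * z) s₀) s₀ 1 - 1| ≤
      (Mconst / (∫ x : ℝ, (h 1 x)^2 * rho x)) * Real.exp (-(s₀ ^ (2 * P.β))) := by
  set c1 : ℝ := ∫ x : ℝ, (h 1 x)^2 * rho x with hc1
  have hc1pos : 0 < c1 := cm_pos 1
  have hcont : Continuous (fun y : ℝ => y * h 1 y) := continuous_id.mul (continuous_h 1)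
  have h1' : ∫ y : ℝ, (y * h 1 y) * rho y = c1 := by
    rw [hc1]; congr 1; funext x; simp only [h1]; ring
  have heq := proj_g2 P hs 1
  rw [split_integral P hs hcont (y_hm_bound 1), h1'] at heq
  have hT := tail_bound' P hs hcont (y_hm_bound 1)
  set T : ℝ := ∫ y : ℝ, (P.chi (2 * y) s₀ - 1) * ((y * h 1 y) * rho y) with hTdef
  rw [heq, show (T + c1) / c1 - 1 = T / c1 by field_simp; ring, abs_div, abs_of_pos hc1pos,
    div_mul_eq_mul_div]
  exact div_le_div_of_nonneg_right hT hc1pos.le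

end Estimates

lemma exp_neg_le_inv {x : ℝ} (hx : 0 < x) : Real.exp (-x) ≤ 1 / x := by
  have hxe : x ≤ Real.exp x := by linarith [Real.add_one_le_exp x]
  rw [Real.exp_neg, one_div]
  exact inv_anti₀ hx hxe

section Dist

variable (P : Params) {s₀ : ℝ}

lemma rpow2b_pos (hs : 1 ≤ s₀) : 0 < s₀ ^ (2 * P.β) :=
  Real.rpow_pos_of_pos (lt_of_lt_of_le one_pos hs) _

lemma chi2_dist (hs : 1 ≤ s₀) (y : ℝ) :
    |P.chi (2 * y) s₀ - 1| ≤ 1 / s₀ ^ (2 * P.β) * (1 + |y|^3) := by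
  have hs2b := rpow2b_pos P hs
  rcases le_or_gt (2 * |y|) (P.K * s₀ ^ P.β) with hy | hy
  · rw [chi2_eq_one P hs hy, sub_self, abs_zero]
    positivity
  · have ht1 : (1:ℝ) ≤ s₀ ^ P.β := sb_one P hs
    have hy3 : 3 * (s₀ ^ P.β) ≤ |y| := by
      have hK := P.hK; nlinarith
    have h27 : (3 * (s₀ ^ P.β))^3 ≤ |y|^3 := by
      apply pow_le_pow_left₀ (by positivity) hy3
    have hkey : s₀ ^ (2 * P.β) ≤ 1 + |y|^3 := by
      rw [← sb_sq P hs]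
      nlinarith [sq_nonneg (s₀ ^ P.β)]
    calc |P.chi (2 * y) s₀ - 1| ≤ 1 := abs_chi2_sub_one P hs y
      _ ≤ 1 / s₀ ^ (2 * P.β) * (1 + |y|^3) := by
          rw [div_mul_eq_mul_div, one_mul, le_div_iff₀ hs2b, one_mul]
          exact hkey

lemma chi2_dist_y (hs : 1 ≤ s₀) (y : ℝ) :
    |y| * |P.chi (2 * y) s₀ - 1| ≤ 1 / s₀ ^ (2 * P.β) * (1 + |y|^3) := by
  have hs2b := rpow2b_pos P hs
  rcases le_or_gt (2 * |y|) (P.K * s₀ ^ P.β) with hy | hy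
  · rw [chi2_eq_one P hs hy, sub_self, abs_zero, mul_zero]
    positivity
  · have ht1 : (1:ℝ) ≤ s₀ ^ P.β := sb_one P hs
    have hy3 : 3 * (s₀ ^ P.β) ≤ |y| := by
      have hK := P.hK; nlinarith
    have h9 : (3 * (s₀ ^ P.β))^2 ≤ |y|^2 := by
      apply pow_le_pow_left₀ (by positivity) hy3
    have hcube : |y|^2 * |y| = |y|^3 := by ring
    have hkey : s₀ ^ (2 * P.β) * |y| ≤ 1 + |y|^3 := by
      rw [← sb_sq P hs]
      nlinarith [abs_nonneg y, sq_nonneg (s₀ ^ P.β), mul_le_mul_of_nonneg_right h9 (abs_nonneg y)]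
    calc |y| * |P.chi (2 * y) s₀ - 1| ≤ |y| * 1 :=
          mul_le_mul_of_nonneg_left (abs_chi2_sub_one P hs y) (abs_nonneg y)
      _ = |y| := mul_one _
      _ ≤ 1 / s₀ ^ (2 * P.β) * (1 + |y|^3) := by
          rw [div_mul_eq_mul_div, one_mul, le_div_iff₀ hs2b]
          calc |y| * s₀ ^ (2 * P.β) = s₀ ^ (2 * P.β) * |y| := by ring
            _ ≤ 1 + |y|^3 := hkey

lemma abs_le_one_add_cube (y : ℝ) : |y| ≤ 1 + |y|^3 := by
  rcases le_or_gt |y| 1 with hy | hy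
  · have : (0:ℝ) ≤ |y|^3 := by positivity
    linarith
  · have h1 : |y| * 1 ≤ |y| * (|y| * |y|) := by
      apply mul_le_mul_of_nonneg_left _ (abs_nonneg y)
      nlinarith
    have h2 : |y|^3 = |y| * (|y| * |y|) := by ring
    nlinarith

lemma sq_sub_two_le (y : ℝ) : |y^2 - 2| ≤ 3 * (1 + |y|^3) := by
  have h1 : y^2 ≤ 1 + |y|^3 := by
    rcases le_or_gt |y| 1 with hy | hy
    · nlinarith [sq_abs y, abs_nonneg y]
    · nlinarith [sq_abs y, abs_nonneg y]
  have h2 : (0:ℝ) ≤ |y|^3 := by positivity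
  rw [abs_le]; constructor <;> nlinarith [sq_nonneg y]

end Dist

section Rminus

variable (P : Params) {s₀ : ℝ}

lemma rminus_g1 (hs : 1 ≤ s₀) (y : ℝ) :
    |P.rminus (fun z => P.chi (2 * z) s₀) s₀ y| ≤
      (1 + Mconst / (∫ x : ℝ, (h 0 x)^2 * rho x) +
        3 * (Mconst / (∫ x : ℝ, (h 2 x)^2 * rho x))) / s₀ ^ (2 * P.β) * (1 + |y|^3) := by
  have hs2b := rpow2b_pos P hs
  have hM := Mconst_nonneg
  have hc0 := cm_pos 0
  have hc2 := cm_pos 2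
  have he : Real.exp (-(s₀ ^ (2 * P.β))) ≤ 1 / s₀ ^ (2 * P.β) := exp_neg_le_inv hs2b
  have hone : (1:ℝ) ≤ 1 + |y|^3 := by nlinarith [pow_nonneg (abs_nonneg y) 3]
  have hdecomp : P.rminus (fun z => P.chi (2 * z) s₀) s₀ y =
      (P.chi (2 * y) s₀ - 1) - (P.proj (fun z => P.chi (2 * z) s₀) s₀ 0 - 1) -
        P.proj (fun z => P.chi (2 * z) s₀) s₀ 2 * (y^2 - 2) := by
    unfold Params.rminus
    simp only [h0, h1, h2]
    rw [chi_mul P hs y, proj_g1_one P hs]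
    ring
  have t1 := chi2_dist P hs y
  have hp0 := proj_g1_zero P hs
  have hp2 := proj_g1_two P hs
  have t2 : |P.proj (fun z => P.chi (2 * z) s₀) s₀ 0 - 1| ≤
      (Mconst / (∫ x : ℝ, (h 0 x)^2 * rho x)) * (1 / s₀ ^ (2 * P.β)) * (1 + |y|^3) := by
    have step1 : |P.proj (fun z => P.chi (2 * z) s₀) s₀ 0 - 1| ≤
        (Mconst / (∫ x : ℝ, (h 0 x)^2 * rho x)) * (1 / s₀ ^ (2 * P.β)) := by
      refine hp0.trans (mul_le_mul_of_nonneg_left he ?_)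
      exact div_nonneg hM hc0.le
    calc |P.proj (fun z => P.chi (2 * z) s₀) s₀ 0 - 1|
        ≤ (Mconst / (∫ x : ℝ, (h 0 x)^2 * rho x)) * (1 / s₀ ^ (2 * P.β)) := step1
      _ = (Mconst / (∫ x : ℝ, (h 0 x)^2 * rho x)) * (1 / s₀ ^ (2 * P.β)) * 1 := by ring
      _ ≤ _ := by
          apply mul_le_mul_of_nonneg_left hone
          positivity
  have t3 : |P.proj (fun z => P.chi (2 * z) s₀) s₀ 2 * (y^2 - 2)| ≤
      3 * ((Mconst / (∫ x : ℝ, (h 2 x)^2 * rho x)) * (1 / s₀ ^ (2 * P.β))) * (1 + |y|^3) := by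
    rw [abs_mul]
    have hb1 : |P.proj (fun z => P.chi (2 * z) s₀) s₀ 2| ≤
        (Mconst / (∫ x : ℝ, (h 2 x)^2 * rho x)) * (1 / s₀ ^ (2 * P.β)) := by
      refine hp2.trans (mul_le_mul_of_nonneg_left he ?_)
      exact div_nonneg hM hc2.le
    have hb2 := sq_sub_two_le y
    calc |P.proj (fun z => P.chi (2 * z) s₀) s₀ 2| * |y^2 - 2|
        ≤ ((Mconst / (∫ x : ℝ, (h 2 x)^2 * rho x)) * (1 / s₀ ^ (2 * P.β))) * (3 * (1 + |y|^3)) := by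
          apply mul_le_mul hb1 hb2 (abs_nonneg _)
          positivity
      _ = 3 * ((Mconst / (∫ x : ℝ, (h 2 x)^2 * rho x)) * (1 / s₀ ^ (2 * P.β))) * (1 + |y|^3) := by
          ring
  have tri : |P.rminus (fun z => P.chi (2 * z) s₀) s₀ y| ≤
      |P.chi (2 * y) s₀ - 1| + |P.proj (fun z => P.chi (2 * z) s₀) s₀ 0 - 1| +
        |P.proj (fun z => P.chi (2 * z) s₀) s₀ 2 * (y^2 - 2)| := by
    rw [hdecomp]
    have h1 := abs_sub ((P.chi (2 * y) s₀ - 1) - (P.proj (fun z => P.chi (2 * z) s₀) s₀ 0 - 1))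
      (P.proj (fun z => P.chi (2 * z) s₀) s₀ 2 * (y^2 - 2))
    have h2 := abs_sub (P.chi (2 * y) s₀ - 1) (P.proj (fun z => P.chi (2 * z) s₀) s₀ 0 - 1)
    linarith
  have hsum : (1 + Mconst / (∫ x : ℝ, (h 0 x)^2 * rho x) +
        3 * (Mconst / (∫ x : ℝ, (h 2 x)^2 * rho x))) / s₀ ^ (2 * P.β) * (1 + |y|^3) =
      1 / s₀ ^ (2 * P.β) * (1 + |y|^3) +
      (Mconst / (∫ x : ℝ, (h 0 x)^2 * rho x)) * (1 / s₀ ^ (2 * P.β)) * (1 + |y|^3) +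
      3 * ((Mconst / (∫ x : ℝ, (h 2 x)^2 * rho x)) * (1 / s₀ ^ (2 * P.β))) * (1 + |y|^3) := by
    ring
  rw [hsum]
  linarith

lemma rminus_g2 (hs : 1 ≤ s₀) (y : ℝ) :
    |P.rminus (fun z => z * P.chi (2 * z) s₀) s₀ y| ≤
      (1 + Mconst / (∫ x : ℝ, (h 1 x)^2 * rho x)) / s₀ ^ (2 * P.β) * (1 + |y|^3) := by
  have hs2b := rpow2b_pos P hs
  have hM := Mconst_nonneg
  have hc1 := cm_pos 1
  have he : Real.exp (-(s₀ ^ (2 * P.β))) ≤ 1 / s₀ ^ (2 * P.β) := exp_neg_le_inv hs2b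
  have hdecomp : P.rminus (fun z => z * P.chi (2 * z) s₀) s₀ y =
      (P.chi (2 * y) s₀ - 1) * y -
        (P.proj (fun z => z * P.chi (2 * z) s₀) s₀ 1 - 1) * y := by
    unfold Params.rminus
    simp only [h0, h1, h2]
    rw [proj_g2_zero P hs, proj_g2_two P hs]
    linear_combination y * (chi_mul P hs y)
  have t1 : |(P.chi (2 * y) s₀ - 1) * y| ≤ 1 / s₀ ^ (2 * P.β) * (1 + |y|^3) := by
    rw [abs_mul, mul_comm]
    exact chi2_dist_y P hs y
  have t2 : |(P.proj (fun z => z * P.chi (2 * z) s₀) s₀ 1 - 1) * y| ≤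
      (Mconst / (∫ x : ℝ, (h 1 x)^2 * rho x)) * (1 / s₀ ^ (2 * P.β)) * (1 + |y|^3) := by
    rw [abs_mul]
    have hb1 : |P.proj (fun z => z * P.chi (2 * z) s₀) s₀ 1 - 1| ≤
        (Mconst / (∫ x : ℝ, (h 1 x)^2 * rho x)) * (1 / s₀ ^ (2 * P.β)) := by
      refine (proj_g2_one P hs).trans (mul_le_mul_of_nonneg_left he ?_)
      exact div_nonneg hM hc1.le
    calc |P.proj (fun z => z * P.chi (2 * z) s₀) s₀ 1 - 1| * |y|
        ≤ ((Mconst / (∫ x : ℝ, (h 1 x)^2 * rho x)) * (1 / s₀ ^ (2 * P.β))) * (1 + |y|^3) := by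
          apply mul_le_mul hb1 (abs_le_one_add_cube y) (abs_nonneg _)
          positivity
      _ = _ := by ring
  have tri : |P.rminus (fun z => z * P.chi (2 * z) s₀) s₀ y| ≤
      |(P.chi (2 * y) s₀ - 1) * y| +
        |(P.proj (fun z => z * P.chi (2 * z) s₀) s₀ 1 - 1) * y| := by
    rw [hdecomp]
    exact abs_sub _ _
  have hsum : (1 + Mconst / (∫ x : ℝ, (h 1 x)^2 * rho x)) / s₀ ^ (2 * P.β) * (1 + |y|^3) =
      1 / s₀ ^ (2 * P.β) * (1 + |y|^3) +
      (Mconst / (∫ x : ℝ, (h 1 x)^2 * rho x)) * (1 / s₀ ^ (2 * P.β)) * (1 + |y|^3) := by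
    ring
  rw [hsum]
  linarith

lemma re_g1 (hs : 1 ≤ s₀) (y : ℝ) :
    P.re (fun z => P.chi (2 * z) s₀) s₀ y = 0 := by
  unfold Params.re
  simp only
  rcases le_or_gt |y| (P.K * s₀ ^ P.β) with hy | hy
  · rw [chi_eq_one P hs hy]; ring
  · rw [chi2_eq_zero P hs hy]; ring

lemma re_g2 (hs : 1 ≤ s₀) (y : ℝ) :
    P.re (fun z => z * P.chi (2 * z) s₀) s₀ y = 0 := by
  unfold Params.re
  simp only
  rcases le_or_gt |y| (P.K * s₀ ^ P.β) with hy | hy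
  · rw [chi_eq_one P hs hy]; ring
  · rw [chi2_eq_zero P hs hy]; ring

end Rminus

end NLHeat

set_option maxHeartbeats 2000000 in
open NLHeat in
/-- projections of `χ(2y,s₀)` and `y χ(2y,s₀)`. -/
theorem cutoff_projection_estimates (P : NLHeat.Params) :
    ∃ s₁₀' : ℝ, 1 ≤ s₁₀' ∧ ∃ C : ℝ, 0 < C ∧ ∀ s₀ : ℝ, s₁₀' ≤ s₀ →
      -- the case g(y) = χ(2y,s₀)
      ((∀ y : ℝ, P.re (fun z => P.chi (2 * z) s₀) s₀ y = 0) ∧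
       (∀ y : ℝ, |P.rminus (fun z => P.chi (2 * z) s₀) s₀ y| ≤
          C / s₀ ^ (2 * P.β) * (1 + |y|^3)) ∧
       |P.proj (fun z => P.chi (2 * z) s₀) s₀ 0 - 1| ≤ C * Real.exp (-(s₀ ^ (2 * P.β))) ∧
       |P.proj (fun z => P.chi (2 * z) s₀) s₀ 1| ≤ C * Real.exp (-(s₀ ^ (2 * P.β))) ∧
       |P.proj (fun z => P.chi (2 * z) s₀) s₀ 2| ≤ C * Real.exp (-(s₀ ^ (2 * P.β)))) ∧
      -- the case g(y) = y χ(2y,s₀)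
      ((∀ y : ℝ, P.re (fun z => z * P.chi (2 * z) s₀) s₀ y = 0) ∧
       (∀ y : ℝ, |P.rminus (fun z => z * P.chi (2 * z) s₀) s₀ y| ≤
          C / s₀ ^ (2 * P.β) * (1 + |y|^3)) ∧
       |P.proj (fun z => z * P.chi (2 * z) s₀) s₀ 1 - 1| ≤ C * Real.exp (-(s₀ ^ (2 * P.β))) ∧
       |P.proj (fun z => z * P.chi (2 * z) s₀) s₀ 0| ≤ C * Real.exp (-(s₀ ^ (2 * P.β))) ∧
       |P.proj (fun z => z * P.chi (2 * z) s₀) s₀ 2| ≤ C * Real.exp (-(s₀ ^ (2 * P.β)))) := by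
  refine ⟨1, le_refl 1, ?_⟩
  have hM := Mconst_nonneg
  have hc0 := cm_pos 0
  have hc1 := cm_pos 1
  have hc2 := cm_pos 2
  set c0 : ℝ := ∫ x : ℝ, (h 0 x)^2 * rho x with hc0def
  set c1 : ℝ := ∫ x : ℝ, (h 1 x)^2 * rho x with hc1def
  set c2 : ℝ := ∫ x : ℝ, (h 2 x)^2 * rho x with hc2def
  have ha : (0:ℝ) < 1 / c0 := by positivity
  have hb : (0:ℝ) < 1 / c1 := by positivity
  have hcc : (0:ℝ) < 1 / c2 := by positivity
  refine ⟨9 * (Mconst + 1) * (1 + 1 / c0 + 1 / c1 + 1 / c2), ?_, ?_⟩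
  · nlinarith
  intro s₀ hs
  set C : ℝ := 9 * (Mconst + 1) * (1 + 1 / c0 + 1 / c1 + 1 / c2) with hCdef
  have hC : 0 < C := by rw [hCdef]; nlinarith
  have he0 : Mconst / c0 = Mconst * (1 / c0) := by ring
  have he1 : Mconst / c1 = Mconst * (1 / c1) := by ring
  have he2 : Mconst / c2 = Mconst * (1 / c2) := by ring
  have hC0 : Mconst / c0 ≤ C := by
    rw [he0, hCdef]; nlinarith [mul_nonneg hM ha.le, mul_nonneg hM hb.le, mul_nonneg hM hcc.le]
  have hC1 : Mconst / c1 ≤ C := by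
    rw [he1, hCdef]; nlinarith [mul_nonneg hM ha.le, mul_nonneg hM hb.le, mul_nonneg hM hcc.le]
  have hC2 : Mconst / c2 ≤ C := by
    rw [he2, hCdef]; nlinarith [mul_nonneg hM ha.le, mul_nonneg hM hb.le, mul_nonneg hM hcc.le]
  have hA : 1 + Mconst / c0 + 3 * (Mconst / c2) ≤ C := by
    rw [he0, he2, hCdef]
    nlinarith [mul_nonneg hM ha.le, mul_nonneg hM hb.le, mul_nonneg hM hcc.le]
  have hB : 1 + Mconst / c1 ≤ C := by
    rw [he1, hCdef]
    nlinarith [mul_nonneg hM ha.le, mul_nonneg hM hb.le, mul_nonneg hM hcc.le]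
  have hs2b := rpow2b_pos P hs
  have hexp : (0:ℝ) < Real.exp (-(s₀ ^ (2 * P.β))) := Real.exp_pos _
  constructor
  · refine ⟨re_g1 P hs, ?_, ?_, ?_, ?_⟩
    · intro y
      refine (rminus_g1 P hs y).trans ?_
      apply mul_le_mul_of_nonneg_right _ (by nlinarith [pow_nonneg (abs_nonneg y) 3])
      exact div_le_div_of_nonneg_right hA hs2b.le
    · exact (proj_g1_zero P hs).trans (mul_le_mul_of_nonneg_right hC0 hexp.le)
    · rw [proj_g1_one P hs, abs_zero]; positivity
    · exact (proj_g1_two P hs).trans (mul_le_mul_of_nonneg_right hC2 hexp.le)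
  · refine ⟨re_g2 P hs, ?_, ?_, ?_, ?_⟩
    · intro y
      refine (rminus_g2 P hs y).trans ?_
      apply mul_le_mul_of_nonneg_right _ (by nlinarith [pow_nonneg (abs_nonneg y) 3])
      exact div_le_div_of_nonneg_right hB hs2b.le
    · exact (proj_g2_one P hs).trans (mul_le_mul_of_nonneg_right hC1 hexp.le)
    · rw [proj_g2_zero P hs, abs_zero]; positivity
    · rw [proj_g2_two P hs, abs_zero]; positivity
end
end

section
/- There exist a constant C > 0 and s* ≥ 1 such that for all s ≥ s*: ‖∂_yφ(·,s)‖_{L^∞(ℝ)} ≤ C/s^β, ‖∂_sφ(·,s)‖_{L^∞(ℝ)} ≤ C/s, ‖∂_y²φ(·,s)‖_{L^∞(ℝ)} ≤ C/s^{2β}, and the rest term satisfies ‖R(·,s)‖_{L^∞(ℝ)} ≤ C/s, where R(y,s) = ∂_y²φ − (y/2)∂_yφ − φ/(p−1) + φ^p − ∂_sφ + μ|∂_yφ|^q. -/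
noncomputable section
open MeasureTheory Real Set Filter Topology

namespace ProfAux
open NLHeat Real

variable (P : NLHeat.Params)

lemma hp1 : (2:ℝ) < P.p - 1 := by linarith [P.hp]

lemma c_pos : (0:ℝ) < P.p - 1 := by linarith [P.hp]

lemma b_nonneg : 0 ≤ P.b := by
  unfold NLHeat.Params.b
  have h1 : (0:ℝ) ≤ P.p - 1 := (c_pos P).le
  have hI : 0 ≤ ∫ y : ℝ, |y| ^ P.q * Real.exp (-(y^2)/4) :=
    MeasureTheory.integral_nonneg fun y => by positivity
  have h2 : (0:ℝ) ≤ ((4 * π) ^ ((1:ℝ)/2) * (P.p + 1)^2) /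
      (P.p * ∫ y : ℝ, |y| ^ P.q * Real.exp (-(y^2)/4)) := by
    apply div_nonneg
    · have : (0:ℝ) ≤ 4 * π := by positivity
      positivity
    · exact mul_nonneg (by linarith [P.hp]) hI
  have h3 : (0:ℝ) ≤ P.μ := P.hμ.le
  positivity

lemma a_nonneg : 0 ≤ P.a := by
  unfold NLHeat.Params.a NLHeat.Params.κ
  have h1 : (0:ℝ) ≤ P.p - 1 := (c_pos P).le
  have hb := b_nonneg P
  positivity

/-- exponent -/
def e : ℝ := -(1:ℝ)/(P.p - 1)

lemma e_neg : e P < 0 := by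
  unfold e
  have := c_pos P
  exact div_neg_of_neg_of_pos (by norm_num) this

/-- the base -/
def w (y s : ℝ) : ℝ := P.p - 1 + P.b * y^2 / s ^ (2 * P.β)

lemma S_pos {s : ℝ} (hs : 0 < s) : 0 < s ^ (2 * P.β) := Real.rpow_pos_of_pos hs _

lemma w_pos {s : ℝ} (hs : 0 < s) (y : ℝ) : 0 < w P y s := by
  have h1 := c_pos P
  have h2 : 0 ≤ P.b * y^2 / s ^ (2 * P.β) :=
    div_nonneg (mul_nonneg (b_nonneg P) (sq_nonneg y)) (S_pos P hs).le
  unfold w; linarith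

lemma w_ge {s : ℝ} (hs : 0 < s) (y : ℝ) : P.p - 1 ≤ w P y s := by
  have h2 : 0 ≤ P.b * y^2 / s ^ (2 * P.β) :=
    div_nonneg (mul_nonneg (b_nonneg P) (sq_nonneg y)) (S_pos P hs).le
  unfold w; linarith

end ProfAux

namespace ProfAux
open NLHeat Real

variable (P : NLHeat.Params)

/-- first y-derivative -/
def Fy (y s : ℝ) : ℝ :=
  P.b * (2 * y) / s ^ (2 * P.β) * e P * w P y s ^ (e P - 1)

lemma hasDerivAt_w {s : ℝ} (y : ℝ) :
    HasDerivAt (fun z : ℝ => P.p - 1 + P.b * z ^ 2 / s ^ (2 * P.β))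
      (P.b * (2 * y) / s ^ (2 * P.β)) y := by
  have h1 : HasDerivAt (fun z : ℝ => z ^ 2) (2 * y) y := by
    simpa using hasDerivAt_pow 2 y
  have := ((h1.const_mul P.b).div_const (s ^ (2 * P.β))).const_add (P.p - 1)
  simpa using this

lemma hasDerivAt_phi_y {s : ℝ} (hs : 0 < s) (y : ℝ) :
    HasDerivAt (fun z => P.φ z s) (Fy P y s) y := by
  have hg := hasDerivAt_w P (s := s) y
  have hw := hg.rpow_const (p := -(1:ℝ)/(P.p - 1)) (Or.inl (ne_of_gt (w_pos P hs y)))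
  have := hw.add_const (P.a / s ^ (2 * P.β))
  simpa [NLHeat.Params.φ, Fy, e, w] using this

/-- second y-derivative -/
def F2 (y s : ℝ) : ℝ :=
  P.b * 2 / s ^ (2 * P.β) * e P * w P y s ^ (e P - 1) +
    P.b * (2 * y) / s ^ (2 * P.β) * e P *
      (P.b * (2 * y) / s ^ (2 * P.β) * (e P - 1) * w P y s ^ (e P - 1 - 1))

lemma hasDerivAt_Fy {s : ℝ} (hs : 0 < s) (y : ℝ) :
    HasDerivAt (fun z => Fy P z s) (F2 P y s) y := by
  have hg := hasDerivAt_w P (s := s) y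
  have hA : HasDerivAt (fun z : ℝ => P.b * (2 * z) / s ^ (2 * P.β) * e P)
      (P.b * 2 / s ^ (2 * P.β) * e P) y := by
    have h1 : HasDerivAt (fun z : ℝ => z) 1 y := hasDerivAt_id y
    have := (((h1.const_mul (2:ℝ)).const_mul P.b).div_const (s ^ (2 * P.β))).mul_const (e P)
    simpa using this
  have hB : HasDerivAt (fun z : ℝ => w P z s ^ (e P - 1))
      (P.b * (2 * y) / s ^ (2 * P.β) * (e P - 1) * w P y s ^ (e P - 1 - 1)) y := by
    have := hg.rpow_const (p := e P - 1) (Or.inl (ne_of_gt (w_pos P hs y)))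
    simpa [w] using this
  have := hA.mul hB
  have heq : ∀ z : ℝ, Fy P z s = (P.b * (2 * z) / s ^ (2 * P.β) * e P) * w P z s ^ (e P - 1) :=
    fun z => rfl
  simp only [Fy, F2]
  exact this

lemma deriv_phi_y {s : ℝ} (hs : 0 < s) (y : ℝ) :
    deriv (fun z => P.φ z s) y = Fy P y s := (hasDerivAt_phi_y P hs y).deriv

lemma deriv2_phi_y {s : ℝ} (hs : 0 < s) (y : ℝ) :
    deriv (deriv (fun z => P.φ z s)) y = F2 P y s := by
  have h1 : deriv (fun z => P.φ z s) = fun z => Fy P z s :=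
    funext fun z => deriv_phi_y P hs z
  rw [h1]
  exact (hasDerivAt_Fy P hs y).deriv

/-- s-derivative -/
def Ds (y s : ℝ) : ℝ :=
  (0 * s ^ (2 * P.β) - P.b * y ^ 2 * (2 * P.β * s ^ (2 * P.β - 1))) / (s ^ (2 * P.β)) ^ 2 *
      e P * w P y s ^ (e P - 1) +
    (0 * s ^ (2 * P.β) - P.a * (2 * P.β * s ^ (2 * P.β - 1))) / (s ^ (2 * P.β)) ^ 2

lemma hasDerivAt_phi_s {s : ℝ} (hs : 0 < s) (y : ℝ) :
    HasDerivAt (fun σ => P.φ y σ) (Ds P y s) s := by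
  have hr : HasDerivAt (fun σ : ℝ => σ ^ (2 * P.β)) (2 * P.β * s ^ (2 * P.β - 1)) s :=
    Real.hasDerivAt_rpow_const (Or.inl hs.ne')
  have hSne : s ^ (2 * P.β) ≠ 0 := (S_pos P hs).ne'
  have hq : HasDerivAt (fun σ : ℝ => P.b * y ^ 2 / σ ^ (2 * P.β))
      ((0 * s ^ (2 * P.β) - P.b * y ^ 2 * (2 * P.β * s ^ (2 * P.β - 1))) /
        (s ^ (2 * P.β)) ^ 2) s :=
    (hasDerivAt_const s (P.b * y ^ 2)).div hr hSne
  have hq2 := hq.const_add (P.p - 1)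
  have hw := hq2.rpow_const (p := -(1:ℝ)/(P.p - 1)) (Or.inl (ne_of_gt (w_pos P hs y)))
  have ha : HasDerivAt (fun σ : ℝ => P.a / σ ^ (2 * P.β))
      ((0 * s ^ (2 * P.β) - P.a * (2 * P.β * s ^ (2 * P.β - 1))) / (s ^ (2 * P.β)) ^ 2) s :=
    (hasDerivAt_const s P.a).div hr hSne
  have := hw.add ha
  simpa [NLHeat.Params.φ, Ds, e, w, Pi.add_def] using this

end ProfAux

namespace ProfAux
open NLHeat Real

lemma rpow_sub_rpow_le {pw x t M : ℝ} (hpw : 1 ≤ pw) (hx : 0 < x) (ht : 0 ≤ t)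
    (hM : x + t ≤ M) : (x + t) ^ pw - x ^ pw ≤ pw * M ^ (pw - 1) * t := by
  have hkey := norm_image_sub_le_of_norm_deriv_le_segment'
    (f := fun r : ℝ => r ^ pw) (f' := fun r : ℝ => pw * r ^ (pw - 1))
    (a := x) (b := x + t) (C := pw * M ^ (pw - 1))
    (fun r hr => (Real.hasDerivAt_rpow_const
      (Or.inl (lt_of_lt_of_le hx hr.1).ne')).hasDerivWithinAt)
    (fun r hr => by
      have hr0 : (0:ℝ) ≤ r := le_trans hx.le hr.1
      have hrM : r ≤ M := le_trans hr.2.le hM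
      rw [Real.norm_eq_abs, abs_of_nonneg (mul_nonneg (by linarith)
        (Real.rpow_nonneg hr0 _))]
      exact mul_le_mul_of_nonneg_left (Real.rpow_le_rpow hr0 hrM (by linarith))
        (by linarith))
    (x + t) (right_mem_Icc.2 (by linarith))
  have h2 : (x + t) ^ pw - x ^ pw ≤ |(x + t) ^ pw - x ^ pw| := le_abs_self _
  rw [← Real.norm_eq_abs] at h2
  calc (x + t) ^ pw - x ^ pw ≤ pw * M ^ (pw - 1) * (x + t - x) := le_trans h2 hkey
  _ = pw * M ^ (pw - 1) * t := by ring

variable (P : NLHeat.Params)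

lemma beta_pos : 0 < P.β := by
  unfold NLHeat.Params.β
  have := P.hp
  exact div_pos (by linarith) (by linarith)

lemma one_le_two_beta : 1 ≤ 2 * P.β := by
  unfold NLHeat.Params.β
  have h := c_pos P
  rw [mul_div_assoc', le_div_iff₀ (by linarith)]
  linarith

lemma q_nonneg : 0 ≤ P.q := by
  unfold NLHeat.Params.q
  have := P.hp
  positivity

lemma one_le_beta_q : 1 ≤ P.β * P.q := by
  have h := c_pos P
  have h1 : P.p + 1 ≠ 0 := by nlinarith
  have h2 : P.p - 1 ≠ 0 := h.ne'
  have hq : P.β * P.q = P.p / (P.p - 1) := by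
    unfold NLHeat.Params.β NLHeat.Params.q
    field_simp
  rw [hq, le_div_iff₀ h]
  linarith

/-- constants -/
def C1 : ℝ := 2 * Real.sqrt P.b / (P.p - 1) * (P.p - 1) ^ (e P - 1/2)
def C2 : ℝ := 2 * P.β / (P.p - 1) * (P.p - 1) ^ (e P) + 2 * P.β * P.a
def C3 : ℝ := (2 * P.b / (P.p - 1)) * (P.p - 1) ^ (e P - 1) +
  (4 * P.b * (1 - e P) / (P.p - 1)) * (P.p - 1) ^ (e P - 1)

lemma C1_nonneg : 0 ≤ C1 P := by
  unfold C1
  have h1 := c_pos P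
  positivity

lemma C2_nonneg : 0 ≤ C2 P := by
  unfold C2
  have h1 := c_pos P
  have h2 := beta_pos P
  have h3 := a_nonneg P
  positivity

lemma C3_nonneg : 0 ≤ C3 P := by
  unfold C3
  have h1 := c_pos P
  have h2 := b_nonneg P
  have h3 : 0 ≤ 1 - e P := by have := e_neg P; linarith
  positivity

lemma S_ge_one {s : ℝ} (hs : 1 ≤ s) : 1 ≤ s ^ (2 * P.β) :=
  Real.one_le_rpow hs (by have := beta_pos P; positivity)

lemma S_ge_s {s : ℝ} (hs : 1 ≤ s) : s ≤ s ^ (2 * P.β) := by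
  have h := Real.rpow_le_rpow_of_exponent_le hs (one_le_two_beta P)
  rwa [Real.rpow_one] at h

lemma sqrtS {s : ℝ} (hs : 0 < s) : Real.sqrt (s ^ (2 * P.β)) = s ^ P.β := by
  have h1 : s ^ (2 * P.β) = (s ^ P.β) ^ (2:ℕ) := by
    rw [← Real.rpow_natCast (s ^ P.β) 2, ← Real.rpow_mul hs.le]
    norm_num [mul_comm]
  rw [h1, Real.sqrt_sq (Real.rpow_nonneg hs.le _)]

lemma w_rpow_le {s : ℝ} (hs : 0 < s) (y : ℝ) {z : ℝ} (hz : z ≤ 0) :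
    w P y s ^ z ≤ (P.p - 1) ^ z :=
  Real.rpow_le_rpow_of_nonpos (c_pos P) (w_ge P hs y) hz

/-- Bound on the first y-derivative. -/
lemma Fy_bound {s : ℝ} (hs : 1 ≤ s) (y : ℝ) : |Fy P y s| ≤ C1 P / s ^ P.β := by
  have hs0 : (0:ℝ) < s := lt_of_lt_of_le one_pos hs
  have hc := c_pos P
  have hS := S_pos P hs0
  have hw := w_pos P hs0 y
  have hb := b_nonneg P
  have he := e_neg P
  have hu0 : 0 ≤ P.b * y ^ 2 / s ^ (2 * P.β) := by positivity
  have huw : P.b * y ^ 2 / s ^ (2 * P.β) ≤ w P y s := by unfold w; linarith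
  have habs : |Fy P y s| =
      2 * P.b * |y| / s ^ (2 * P.β) * (1 / (P.p - 1)) * w P y s ^ (e P - 1) := by
    unfold Fy e
    rw [abs_mul, abs_mul, abs_of_pos (Real.rpow_pos_of_pos hw _), abs_div,
      abs_of_pos hS, abs_mul, abs_of_nonneg hb, abs_mul,
      abs_of_nonneg (by norm_num : (0:ℝ) ≤ 2), abs_div, abs_neg, abs_one, abs_of_pos hc]
    ring
  have hkey : 2 * P.b * |y| / s ^ (2 * P.β) =
      2 * (Real.sqrt P.b / s ^ P.β) * Real.sqrt (P.b * y ^ 2 / s ^ (2 * P.β)) := by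
    have h2 : P.b / s ^ (2 * P.β) * (P.b * y ^ 2 / s ^ (2 * P.β)) =
        (P.b * |y| / s ^ (2 * P.β)) ^ 2 := by
      field_simp
      rw [sq_abs]
    calc 2 * P.b * |y| / s ^ (2 * P.β)
        = 2 * Real.sqrt ((P.b * |y| / s ^ (2 * P.β)) ^ 2) := by
          rw [Real.sqrt_sq (by positivity)]; ring
      _ = 2 * Real.sqrt (P.b / s ^ (2 * P.β) * (P.b * y ^ 2 / s ^ (2 * P.β))) := by rw [h2]
      _ = 2 * (Real.sqrt (P.b / s ^ (2 * P.β)) * Real.sqrt (P.b * y ^ 2 / s ^ (2 * P.β))) := by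
          rw [Real.sqrt_mul (by positivity)]
      _ = 2 * (Real.sqrt P.b / Real.sqrt (s ^ (2 * P.β)) * Real.sqrt (P.b * y ^ 2 / s ^ (2 * P.β))) := by
          rw [Real.sqrt_div hb]
      _ = 2 * (Real.sqrt P.b / s ^ P.β) * Real.sqrt (P.b * y ^ 2 / s ^ (2 * P.β)) := by
          rw [sqrtS P hs0]; ring
  have hmain : Real.sqrt (P.b * y ^ 2 / s ^ (2 * P.β)) * w P y s ^ (e P - 1) ≤
      (P.p - 1) ^ (e P - 1 / 2) := by
    have h1 : Real.sqrt (P.b * y ^ 2 / s ^ (2 * P.β)) ≤ Real.sqrt (w P y s) :=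
      Real.sqrt_le_sqrt huw
    have h2 : Real.sqrt (w P y s) * w P y s ^ (e P - 1) = w P y s ^ (e P - 1 / 2) := by
      rw [Real.sqrt_eq_rpow, ← Real.rpow_add hw]
      congr 1
      ring
    calc Real.sqrt (P.b * y ^ 2 / s ^ (2 * P.β)) * w P y s ^ (e P - 1)
        ≤ Real.sqrt (w P y s) * w P y s ^ (e P - 1) :=
          mul_le_mul_of_nonneg_right h1 (Real.rpow_nonneg hw.le _)
      _ = w P y s ^ (e P - 1 / 2) := h2
      _ ≤ (P.p - 1) ^ (e P - 1 / 2) := w_rpow_le P hs0 y (by linarith)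
  rw [habs, hkey]
  have hspow : (0:ℝ) < s ^ P.β := Real.rpow_pos_of_pos hs0 _
  calc 2 * (Real.sqrt P.b / s ^ P.β) * Real.sqrt (P.b * y ^ 2 / s ^ (2 * P.β)) *
        (1 / (P.p - 1)) * w P y s ^ (e P - 1)
      = 2 * Real.sqrt P.b / (P.p - 1) *
          (Real.sqrt (P.b * y ^ 2 / s ^ (2 * P.β)) * w P y s ^ (e P - 1)) / s ^ P.β := by
        ring
    _ ≤ 2 * Real.sqrt P.b / (P.p - 1) * ((P.p - 1) ^ (e P - 1 / 2)) / s ^ P.β := by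
        gcongr
    _ = C1 P / s ^ P.β := by unfold C1; ring

/-- Bound on the second y-derivative. -/
lemma F2_bound {s : ℝ} (hs : 1 ≤ s) (y : ℝ) : |F2 P y s| ≤ C3 P / s ^ (2 * P.β) := by
  have hs0 : (0:ℝ) < s := lt_of_lt_of_le one_pos hs
  have hc := c_pos P
  have hS := S_pos P hs0
  have hw := w_pos P hs0 y
  have hb := b_nonneg P
  have he := e_neg P
  have huw : P.b * y ^ 2 / s ^ (2 * P.β) ≤ w P y s := by
    unfold w
    have : 0 ≤ P.b * y ^ 2 / s ^ (2 * P.β) := by positivity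
    linarith
  have hX1 : w P y s ^ (e P - 1) ≤ (P.p - 1) ^ (e P - 1) := w_rpow_le P hs0 y (by linarith)
  have hX2 : P.b * y ^ 2 / s ^ (2 * P.β) * w P y s ^ (e P - 1 - 1) ≤ (P.p - 1) ^ (e P - 1) := by
    have h1 : P.b * y ^ 2 / s ^ (2 * P.β) * w P y s ^ (e P - 1 - 1) ≤
        w P y s * w P y s ^ (e P - 1 - 1) :=
      mul_le_mul_of_nonneg_right huw (Real.rpow_nonneg hw.le _)
    have h2 : w P y s * w P y s ^ (e P - 1 - 1) = w P y s ^ (e P - 1) := by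
      have h3 : (e P - 1 - 1) + 1 = e P - 1 := by ring
      rw [← h3, Real.rpow_add_one hw.ne']
      ring
    calc P.b * y ^ 2 / s ^ (2 * P.β) * w P y s ^ (e P - 1 - 1)
        ≤ w P y s * w P y s ^ (e P - 1 - 1) := h1
      _ = w P y s ^ (e P - 1) := h2
      _ ≤ (P.p - 1) ^ (e P - 1) := hX1
  have he_eq : e P = -(1 / (P.p - 1)) := by unfold e; ring
  have hinv : (0:ℝ) ≤ 1 / (P.p - 1) := (one_div_nonneg).2 hc.le
  have hX1pos : 0 < w P y s ^ (e P - 1) := Real.rpow_pos_of_pos hw _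
  have hX2pos : 0 < w P y s ^ (e P - 1 - 1) := Real.rpow_pos_of_pos hw _
  set X1 := w P y s ^ (e P - 1) with hX1def
  set X2 := w P y s ^ (e P - 1 - 1) with hX2def
  have ht1sign : P.b * 2 / s ^ (2 * P.β) * e P * X1 ≤ 0 :=
    mul_nonpos_of_nonpos_of_nonneg
      (mul_nonpos_of_nonneg_of_nonpos (by positivity) he.le) hX1pos.le
  have ht2sign : 0 ≤ P.b * (2 * y) / s ^ (2 * P.β) * e P *
      (P.b * (2 * y) / s ^ (2 * P.β) * (e P - 1) * X2) := by
    have h1 : P.b * (2 * y) / s ^ (2 * P.β) * e P *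
        (P.b * (2 * y) / s ^ (2 * P.β) * (e P - 1) * X2) =
        (P.b * (2 * y) / s ^ (2 * P.β)) ^ 2 * (e P * (e P - 1)) * X2 := by ring
    rw [h1]
    have h2 : 0 ≤ e P * (e P - 1) := by nlinarith [sq_nonneg (e P)]
    positivity
  have e1 : -(P.b * 2 / s ^ (2 * P.β) * e P * X1) =
      2 * P.b / s ^ (2 * P.β) * (1 / (P.p - 1)) * X1 := by
    rw [he_eq]; ring
  have e2 : P.b * (2 * y) / s ^ (2 * P.β) * e P *
      (P.b * (2 * y) / s ^ (2 * P.β) * (e P - 1) * X2) =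
      4 * P.b / s ^ (2 * P.β) * (1 / (P.p - 1)) * (1 - e P) *
        (P.b * y ^ 2 / s ^ (2 * P.β) * X2) := by
    rw [he_eq]
    field_simp
    ring
  have hnn1 : 0 ≤ 2 * P.b / s ^ (2 * P.β) * (1 / (P.p - 1)) :=
    mul_nonneg (by positivity) hinv
  have hnn2 : 0 ≤ 4 * P.b / s ^ (2 * P.β) * (1 / (P.p - 1)) * (1 - e P) :=
    mul_nonneg (mul_nonneg (by positivity) hinv) (by linarith)
  calc |F2 P y s| ≤ |P.b * 2 / s ^ (2 * P.β) * e P * X1| +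
        |P.b * (2 * y) / s ^ (2 * P.β) * e P *
          (P.b * (2 * y) / s ^ (2 * P.β) * (e P - 1) * X2)| := by
        unfold F2
        rw [← hX1def, ← hX2def]
        exact abs_add_le _ _
    _ = -(P.b * 2 / s ^ (2 * P.β) * e P * X1) +
        P.b * (2 * y) / s ^ (2 * P.β) * e P *
          (P.b * (2 * y) / s ^ (2 * P.β) * (e P - 1) * X2) := by
        rw [abs_of_nonpos ht1sign, abs_of_nonneg ht2sign]
    _ = 2 * P.b / s ^ (2 * P.β) * (1 / (P.p - 1)) * X1 +
        4 * P.b / s ^ (2 * P.β) * (1 / (P.p - 1)) * (1 - e P) *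
          (P.b * y ^ 2 / s ^ (2 * P.β) * X2) := by rw [e1, e2]
    _ ≤ 2 * P.b / s ^ (2 * P.β) * (1 / (P.p - 1)) * ((P.p - 1) ^ (e P - 1)) +
        4 * P.b / s ^ (2 * P.β) * (1 / (P.p - 1)) * (1 - e P) * ((P.p - 1) ^ (e P - 1)) :=
        add_le_add (mul_le_mul_of_nonneg_left hX1 hnn1)
          (mul_le_mul_of_nonneg_left hX2 hnn2)
    _ = C3 P / s ^ (2 * P.β) := by
        unfold C3
        ring

end ProfAux

namespace ProfAux
open NLHeat Real

variable (P : NLHeat.Params)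

/-- Bound on the s-derivative. -/
lemma Ds_bound {s : ℝ} (hs : 1 ≤ s) (y : ℝ) : |Ds P y s| ≤ C2 P / s := by
  have hs0 : (0:ℝ) < s := lt_of_lt_of_le one_pos hs
  have hc := c_pos P
  have hS := S_pos P hs0
  have hS1 := S_ge_one P hs
  have hw := w_pos P hs0 y
  have hb := b_nonneg P
  have ha := a_nonneg P
  have he := e_neg P
  have hβ := beta_pos P
  have he_eq : e P = -(1 / (P.p - 1)) := by unfold e; ring
  have hinv : (0:ℝ) ≤ 1 / (P.p - 1) := (one_div_nonneg).2 hc.le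
  have hd : s ^ (2 * P.β - 1) = s ^ (2 * P.β) / s := by
    rw [Real.rpow_sub hs0, Real.rpow_one]
  have hX1pos : 0 < w P y s ^ (e P - 1) := Real.rpow_pos_of_pos hw _
  set X1 := w P y s ^ (e P - 1) with hX1def
  have huX : P.b * y ^ 2 / s ^ (2 * P.β) * X1 ≤ (P.p - 1) ^ (e P) := by
    have huw : P.b * y ^ 2 / s ^ (2 * P.β) ≤ w P y s := by
      unfold w
      have : 0 ≤ P.b * y ^ 2 / s ^ (2 * P.β) := by positivity
      linarith
    have h1 : P.b * y ^ 2 / s ^ (2 * P.β) * X1 ≤ w P y s * X1 :=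
      mul_le_mul_of_nonneg_right huw hX1pos.le
    have h2 : w P y s * X1 = w P y s ^ (e P) := by
      have h3 : (e P - 1) + 1 = e P := by ring
      rw [hX1def, ← h3, Real.rpow_add_one hw.ne']
      ring
    calc P.b * y ^ 2 / s ^ (2 * P.β) * X1 ≤ w P y s * X1 := h1
      _ = w P y s ^ (e P) := h2
      _ ≤ (P.p - 1) ^ (e P) := w_rpow_le P hs0 y he.le
  -- sign analysis of both summands of Ds
  have ht1sign : 0 ≤ (0 * s ^ (2 * P.β) - P.b * y ^ 2 * (2 * P.β * s ^ (2 * P.β - 1))) /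
      (s ^ (2 * P.β)) ^ 2 * e P * X1 := by
    have h1 : (0 * s ^ (2 * P.β) - P.b * y ^ 2 * (2 * P.β * s ^ (2 * P.β - 1))) /
        (s ^ (2 * P.β)) ^ 2 ≤ 0 := by
      apply div_nonpos_of_nonpos_of_nonneg
      · have : 0 ≤ P.b * y ^ 2 * (2 * P.β * s ^ (2 * P.β - 1)) := by positivity
        linarith
      · positivity
    have h2 : 0 ≤ (0 * s ^ (2 * P.β) - P.b * y ^ 2 * (2 * P.β * s ^ (2 * P.β - 1))) /
        (s ^ (2 * P.β)) ^ 2 * e P := by nlinarith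
    exact mul_nonneg h2 hX1pos.le
  have ht2sign : (0 * s ^ (2 * P.β) - P.a * (2 * P.β * s ^ (2 * P.β - 1))) /
      (s ^ (2 * P.β)) ^ 2 ≤ 0 := by
    apply div_nonpos_of_nonpos_of_nonneg
    · have : 0 ≤ P.a * (2 * P.β * s ^ (2 * P.β - 1)) := by positivity
      linarith
    · positivity
  have e1 : (0 * s ^ (2 * P.β) - P.b * y ^ 2 * (2 * P.β * s ^ (2 * P.β - 1))) /
      (s ^ (2 * P.β)) ^ 2 * e P * X1 =
      2 * P.β / s * (1 / (P.p - 1)) * (P.b * y ^ 2 / s ^ (2 * P.β) * X1) := by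
    rw [he_eq, hd]
    field_simp
    ring
  have e2 : -((0 * s ^ (2 * P.β) - P.a * (2 * P.β * s ^ (2 * P.β - 1))) /
      (s ^ (2 * P.β)) ^ 2) = 2 * P.β * P.a / (s * s ^ (2 * P.β)) := by
    rw [hd]
    field_simp
    ring
  calc |Ds P y s| ≤ |(0 * s ^ (2 * P.β) - P.b * y ^ 2 * (2 * P.β * s ^ (2 * P.β - 1))) /
        (s ^ (2 * P.β)) ^ 2 * e P * X1| +
        |(0 * s ^ (2 * P.β) - P.a * (2 * P.β * s ^ (2 * P.β - 1))) / (s ^ (2 * P.β)) ^ 2| := by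
        unfold Ds
        rw [← hX1def]
        exact abs_add_le _ _
    _ = (0 * s ^ (2 * P.β) - P.b * y ^ 2 * (2 * P.β * s ^ (2 * P.β - 1))) /
        (s ^ (2 * P.β)) ^ 2 * e P * X1 +
        -((0 * s ^ (2 * P.β) - P.a * (2 * P.β * s ^ (2 * P.β - 1))) / (s ^ (2 * P.β)) ^ 2) := by
        rw [abs_of_nonneg ht1sign, abs_of_nonpos ht2sign]
    _ = 2 * P.β / s * (1 / (P.p - 1)) * (P.b * y ^ 2 / s ^ (2 * P.β) * X1) +
        2 * P.β * P.a / (s * s ^ (2 * P.β)) := by rw [e1, e2]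
    _ ≤ 2 * P.β / s * (1 / (P.p - 1)) * ((P.p - 1) ^ (e P)) +
        2 * P.β * P.a / (s * 1) := by
        refine add_le_add (mul_le_mul_of_nonneg_left huX (by positivity)) ?_
        apply div_le_div_of_nonneg_left (by positivity) (by positivity)
        nlinarith
    _ = C2 P / s := by
        unfold C2
        field_simp

end ProfAux

namespace ProfAux
open NLHeat Real

variable (P : NLHeat.Params)

def MP : ℝ := (P.p - 1) ^ (e P) + P.a

def C4 : ℝ := C3 P + P.p * (MP P) ^ (P.p - 1) * P.a + P.a / (P.p - 1) + C2 P +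
  P.μ * (C1 P) ^ P.q

lemma MP_nonneg : 0 ≤ MP P := by
  unfold MP
  have h1 : 0 < (P.p - 1) ^ (e P) := Real.rpow_pos_of_pos (c_pos P) _
  have h2 := a_nonneg P
  linarith

lemma C4_nonneg : 0 ≤ C4 P := by
  unfold C4
  have h1 := C3_nonneg P
  have h2 := C2_nonneg P
  have h3 := a_nonneg P
  have h4 := c_pos P
  have h5 : 0 ≤ P.p * (MP P) ^ (P.p - 1) * P.a :=
    mul_nonneg (mul_nonneg (by linarith [P.hp]) (Real.rpow_nonneg (MP_nonneg P) _)) h3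
  have h6 : 0 ≤ P.μ * (C1 P) ^ P.q :=
    mul_nonneg P.hμ.le (Real.rpow_nonneg (C1_nonneg P) _)
  have h7 : 0 ≤ P.a / (P.p - 1) := div_nonneg h3 h4.le
  linarith

lemma Rterm_eq {s : ℝ} (hs : 0 < s) (y : ℝ) :
    P.Rterm y s = F2 P y s +
      ((w P y s ^ (e P) + P.a / s ^ (2 * P.β)) ^ P.p - w P y s ^ (e P - 1)) -
      P.a / ((P.p - 1) * s ^ (2 * P.β)) - Ds P y s + P.μ * |Fy P y s| ^ P.q := by
  have hw := w_pos P hs y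
  have hc := c_pos P
  have hS := S_pos P hs
  unfold NLHeat.Params.Rterm
  rw [deriv2_phi_y P hs y, deriv_phi_y P hs y, (hasDerivAt_phi_s P hs y).deriv]
  have hφ : P.φ y s = w P y s ^ (e P) + P.a / s ^ (2 * P.β) := rfl
  rw [hφ]
  have hwe : w P y s ^ (e P) = w P y s ^ (e P - 1) * w P y s := by
    have h3 : (e P - 1) + 1 = e P := by ring
    have h4 := Real.rpow_add_one hw.ne' (e P - 1)
    rw [h3] at h4
    exact h4
  rw [hwe]
  simp only [Fy, w, e]
  field_simp
  ring

lemma R_bound {s : ℝ} (hs : 1 ≤ s) (y : ℝ) : |P.Rterm y s| ≤ C4 P / s := by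
  have hs0 : (0:ℝ) < s := lt_of_lt_of_le one_pos hs
  have hc := c_pos P
  have hS := S_pos P hs0
  have hS1 := S_ge_one P hs
  have hSs := S_ge_s P hs
  have hw := w_pos P hs0 y
  have ha := a_nonneg P
  have he := e_neg P
  have hp1 : (1:ℝ) ≤ P.p := by linarith [P.hp]
  rw [Rterm_eq P hs0 y]
  -- abbreviations
  have hxpos : 0 < w P y s ^ (e P) := Real.rpow_pos_of_pos hw _
  have htn : 0 ≤ P.a / s ^ (2 * P.β) := div_nonneg ha hS.le
  have hxM : w P y s ^ (e P) + P.a / s ^ (2 * P.β) ≤ MP P := by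
    unfold MP
    have h1 : w P y s ^ (e P) ≤ (P.p - 1) ^ (e P) := w_rpow_le P hs0 y he.le
    have h2 : P.a / s ^ (2 * P.β) ≤ P.a := div_le_self ha hS1
    linarith
  have hXid : (w P y s ^ (e P)) ^ P.p = w P y s ^ (e P - 1) := by
    have hep : e P * P.p = e P - 1 := by
      unfold e
      field_simp
      ring
    rw [← Real.rpow_mul hw.le, hep]
  -- the difference term
  have hdiff_ub : (w P y s ^ (e P) + P.a / s ^ (2 * P.β)) ^ P.p - w P y s ^ (e P - 1) ≤
      P.p * (MP P) ^ (P.p - 1) * P.a / s := by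
    rw [← hXid]
    have h1 := rpow_sub_rpow_le hp1 hxpos htn hxM
    have h2 : P.p * (MP P) ^ (P.p - 1) * (P.a / s ^ (2 * P.β)) =
        P.p * (MP P) ^ (P.p - 1) * P.a / s ^ (2 * P.β) := by ring
    rw [h2] at h1
    refine le_trans h1 (div_le_div_of_nonneg_left ?_ hs0 hSs)
    exact mul_nonneg (mul_nonneg (by linarith) (Real.rpow_nonneg (MP_nonneg P) _)) ha
  have hdiff_lb : 0 ≤ (w P y s ^ (e P) + P.a / s ^ (2 * P.β)) ^ P.p - w P y s ^ (e P - 1) := by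
    rw [← hXid]
    have := Real.rpow_le_rpow hxpos.le (le_add_of_nonneg_right htn) (by linarith : (0:ℝ) ≤ P.p)
    linarith
  have hdiff : |(w P y s ^ (e P) + P.a / s ^ (2 * P.β)) ^ P.p - w P y s ^ (e P - 1)| ≤
      P.p * (MP P) ^ (P.p - 1) * P.a / s := by
    rw [abs_of_nonneg hdiff_lb]
    exact hdiff_ub
  -- the a/(cS) term
  have haS : |P.a / ((P.p - 1) * s ^ (2 * P.β))| ≤ P.a / (P.p - 1) / s := by
    rw [abs_of_nonneg (div_nonneg ha (by positivity))]
    have h1 : P.a / ((P.p - 1) * s ^ (2 * P.β)) = P.a / (P.p - 1) / s ^ (2 * P.β) := by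
      rw [div_div]
    rw [h1]
    exact div_le_div_of_nonneg_left (div_nonneg ha hc.le) hs0 hSs
  -- the F2 term
  have hF2 : |F2 P y s| ≤ C3 P / s := by
    refine le_trans (F2_bound P hs y) (div_le_div_of_nonneg_left (C3_nonneg P) hs0 hSs)
  -- the gradient term
  have hgrad : P.μ * |Fy P y s| ^ P.q ≤ P.μ * (C1 P) ^ P.q / s := by
    have h1 : |Fy P y s| ^ P.q ≤ (C1 P / s ^ P.β) ^ P.q :=
      Real.rpow_le_rpow (abs_nonneg _) (Fy_bound P hs y) (q_nonneg P)
    have h2 : (C1 P / s ^ P.β) ^ P.q = (C1 P) ^ P.q / (s ^ P.β) ^ P.q :=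
      Real.div_rpow (C1_nonneg P) (Real.rpow_nonneg hs0.le P.β) P.q
    have h3 : (s ^ P.β) ^ P.q = s ^ (P.β * P.q) := (Real.rpow_mul hs0.le _ _).symm
    have h4 : s ≤ s ^ (P.β * P.q) := by
      have := Real.rpow_le_rpow_of_exponent_le hs (one_le_beta_q P)
      rwa [Real.rpow_one] at this
    have h5 : (C1 P / s ^ P.β) ^ P.q ≤ (C1 P) ^ P.q / s := by
      rw [h2, h3]
      exact div_le_div_of_nonneg_left (Real.rpow_nonneg (C1_nonneg P) _) hs0 h4
    calc P.μ * |Fy P y s| ^ P.q ≤ P.μ * ((C1 P) ^ P.q / s) :=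
          mul_le_mul_of_nonneg_left (le_trans h1 h5) P.hμ.le
      _ = P.μ * (C1 P) ^ P.q / s := by ring
  have hgrad_abs : |P.μ * |Fy P y s| ^ P.q| = P.μ * |Fy P y s| ^ P.q :=
    abs_of_nonneg (mul_nonneg P.hμ.le (Real.rpow_nonneg (abs_nonneg _) _))
  have hDs := Ds_bound P hs y
  -- assemble
  calc |F2 P y s + ((w P y s ^ (e P) + P.a / s ^ (2 * P.β)) ^ P.p - w P y s ^ (e P - 1)) -
        P.a / ((P.p - 1) * s ^ (2 * P.β)) - Ds P y s + P.μ * |Fy P y s| ^ P.q|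
      ≤ |F2 P y s + ((w P y s ^ (e P) + P.a / s ^ (2 * P.β)) ^ P.p - w P y s ^ (e P - 1)) -
        P.a / ((P.p - 1) * s ^ (2 * P.β)) - Ds P y s| + |P.μ * |Fy P y s| ^ P.q| :=
        abs_add_le _ _
    _ ≤ (|F2 P y s + ((w P y s ^ (e P) + P.a / s ^ (2 * P.β)) ^ P.p - w P y s ^ (e P - 1)) -
        P.a / ((P.p - 1) * s ^ (2 * P.β))| + |Ds P y s|) + |P.μ * |Fy P y s| ^ P.q| :=
        add_le_add_left (abs_sub _ _) _
    _ ≤ ((|F2 P y s + ((w P y s ^ (e P) + P.a / s ^ (2 * P.β)) ^ P.p - w P y s ^ (e P - 1))| +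
        |P.a / ((P.p - 1) * s ^ (2 * P.β))|) + |Ds P y s|) + |P.μ * |Fy P y s| ^ P.q| :=
        add_le_add_left (add_le_add_left (abs_sub _ _) _) _
    _ ≤ (((|F2 P y s| + |(w P y s ^ (e P) + P.a / s ^ (2 * P.β)) ^ P.p -
        w P y s ^ (e P - 1)|) + |P.a / ((P.p - 1) * s ^ (2 * P.β))|) + |Ds P y s|) +
        |P.μ * |Fy P y s| ^ P.q| :=
        add_le_add_left (add_le_add_left (add_le_add_left (abs_add_le _ _) _) _) _
    _ ≤ (((C3 P / s + P.p * (MP P) ^ (P.p - 1) * P.a / s) + P.a / (P.p - 1) / s) + C2 P / s) +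
        P.μ * (C1 P) ^ P.q / s := by
        rw [hgrad_abs]
        exact add_le_add (add_le_add (add_le_add (add_le_add hF2 hdiff) haS) hDs) hgrad
    _ = C4 P / s := by
        unfold C4
        ring

end ProfAux

namespace ProfAux
lemma div_le_div_of_le_left_aux {a b c : ℝ} (_ : 0 ≤ a) (hc : 0 < c) (h : a ≤ b) :
    a / c ≤ b / c := (div_le_div_iff_of_pos_right hc).2 h
end ProfAux

/-- bounds on the derivatives of the profile `φ` and on the rest term `R`. -/
theorem profile_and_rest_bounds (P : NLHeat.Params) :
    ∃ C : ℝ, 0 < C ∧ ∃ sstar : ℝ, 1 ≤ sstar ∧ ∀ s : ℝ, sstar ≤ s →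
      (∀ y : ℝ, |deriv (fun z => P.φ z s) y| ≤ C / s ^ P.β) ∧
      (∀ y : ℝ, |deriv (fun σ => P.φ y σ) s| ≤ C / s) ∧
      (∀ y : ℝ, |deriv (deriv (fun z => P.φ z s)) y| ≤ C / s ^ (2 * P.β)) ∧
      (∀ y : ℝ, |P.Rterm y s| ≤ C / s) := by
  have h1 := ProfAux.C1_nonneg P
  have h2 := ProfAux.C2_nonneg P
  have h3 := ProfAux.C3_nonneg P
  have h4 := ProfAux.C4_nonneg P
  refine ⟨ProfAux.C1 P + ProfAux.C2 P + ProfAux.C3 P + ProfAux.C4 P + 1, by linarith,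
    1, le_refl 1, fun s hs => ?_⟩
  have hs0 : (0:ℝ) < s := lt_of_lt_of_le one_pos hs
  have hβpow : (0:ℝ) < s ^ P.β := Real.rpow_pos_of_pos hs0 _
  have h2βpow : (0:ℝ) < s ^ (2 * P.β) := Real.rpow_pos_of_pos hs0 _
  refine ⟨fun y => ?_, fun y => ?_, fun y => ?_, fun y => ?_⟩
  · rw [ProfAux.deriv_phi_y P hs0 y]
    refine le_trans (ProfAux.Fy_bound P hs y) ?_
    exact ProfAux.div_le_div_of_le_left_aux h1 hβpow (by linarith)
  · rw [(ProfAux.hasDerivAt_phi_s P hs0 y).deriv]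
    refine le_trans (ProfAux.Ds_bound P hs y) ?_
    exact ProfAux.div_le_div_of_le_left_aux h2 hs0 (by linarith)
  · rw [ProfAux.deriv2_phi_y P hs0 y]
    refine le_trans (ProfAux.F2_bound P hs y) ?_
    exact ProfAux.div_le_div_of_le_left_aux h3 h2βpow (by linarith)
  · refine le_trans (ProfAux.R_bound P hs y) ?_
    exact ProfAux.div_le_div_of_le_left_aux h4 hs0 (by linarith)
end
end
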